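/- arXiv:1310.8325 — 4 statements merged into one kernel-verified Lean document; each statement's English description precedes it below -/
import Mathlib

section
/- Let K be a field, n ≥ 1, and i ∈ {1,…,n}. Let N be the subgroup of H_i consisting of those automorphisms that fix each of the variables X_1,…,X_i, and let A be the subgroup of H_i consisting of those automorphisms that send each of X_1,…,X_i to a polynomial of degree ≤ 1 in X_1,…,X_i and fix each of X_{i+1},…,X_n (so A is isomorphic to Af_i(K)). Then H_i is the internal semidirect product of N by A: N is normal in H_i, N ∩ A is trivial, and every element of H_i is uniquely a product of an element of A and an element of N. Moreover N is canonically isomorphic to the group GA_{n−i}(K[X_1,…,X_i]) of K[X_1,…,X_i]-algebra automorphisms of K[X_1,…,X_n]. -/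
open MvPolynomial

noncomputable section

theorem aeval_update_of_not_mem_vars {K : Type*} [Field K] {n : ℕ} {i : Fin n}
    {p : MvPolynomial (Fin n) K} (h : i ∉ p.vars) (q : MvPolynomial (Fin n) K) :
    aeval (Function.update X i q) p = p := by
  have : aeval (Function.update X i q) p = aeval X p := by
    simp only [aeval_eq_eval₂Hom]
    refine eval₂Hom_congr' rfl (fun j hj _ => ?_) rfl
    have hji : j ≠ i := fun hji => h (hji ▸ hj)
    simp [Function.update_of_ne hji]
  rw [this, aeval_X_left_apply]

open Classical in
/-- The elementary-type automorphism `σ_{i,α,f}` of `K[X_1,…,X_n]`. -/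
def sigmaAut {K : Type*} [Field K] {n : ℕ} (i : Fin n) (α : K) (f : MvPolynomial (Fin n) K) :
    MvPolynomial (Fin n) K ≃ₐ[K] MvPolynomial (Fin n) K :=
  if h : α ≠ 0 ∧ i ∉ f.vars then
    AlgEquiv.ofAlgHom (aeval (Function.update X i (C α * X i + f)))
      (aeval (Function.update X i (C α⁻¹ * X i - C α⁻¹ * f)))
      (by
        rw [comp_aeval]
        have hX : (fun j => (aeval (Function.update X i (C α * X i + f)))
            (Function.update X i (C α⁻¹ * X i - C α⁻¹ * f) j)) = X := by
          funext j
          by_cases hj : j = i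
          · subst hj
            have hf' : aeval (Function.update X j (C α * X j + f)) f = f :=
              aeval_update_of_not_mem_vars h.2 _
            simp only [Function.update_self, map_sub, map_mul, aeval_X, Function.update_self,
              aeval_C, hf', algebraMap_eq]
            rw [mul_add, ← mul_assoc, ← C_mul, inv_mul_cancel₀ h.1, C_1, one_mul]
            ring
          · simp [Function.update_of_ne hj]
        rw [hX, aeval_X_left]
      )
      (by
        rw [comp_aeval]
        have hX : (fun j => (aeval (Function.update X i (C α⁻¹ * X i - C α⁻¹ * f)))
            (Function.update X i (C α * X i + f) j)) = X := by
          funext j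
          by_cases hj : j = i
          · subst hj
            have hf' : aeval (Function.update X j (C α⁻¹ * X j - C α⁻¹ * f)) f = f :=
              aeval_update_of_not_mem_vars h.2 _
            simp only [Function.update_self, map_add, map_mul, aeval_X, Function.update_self,
              aeval_C, hf', algebraMap_eq]
            rw [mul_sub, ← mul_assoc, ← mul_assoc, ← C_mul, mul_inv_cancel₀ h.1,
              C_1, one_mul, one_mul]
            ring
          · simp [Function.update_of_ne hj]
        rw [hX, aeval_X_left]
      )
  else AlgEquiv.refl

def IsLinearAut {R : Type*} [CommRing R] {m : ℕ}
    (ψ : MvPolynomial (Fin m) R ≃ₐ[R] MvPolynomial (Fin m) R) : Prop :=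
  ∃ M : Matrix.GeneralLinearGroup (Fin m) R,
    ∀ j, ψ (X j) = ∑ k, C ((M : Matrix (Fin m) (Fin m) R) j k) * X k

def IsElementaryAut {R : Type*} [CommRing R] {m : ℕ}
    (ψ : MvPolynomial (Fin m) R ≃ₐ[R] MvPolynomial (Fin m) R) : Prop :=
  ∃ (j : Fin m) (f : MvPolynomial (Fin m) R), j ∉ f.vars ∧ ψ (X j) = X j + f ∧
    ∀ k, k ≠ j → ψ (X k) = X k

def TameGroup (R : Type*) [CommRing R] (m : ℕ) :
    Subgroup (MvPolynomial (Fin m) R ≃ₐ[R] MvPolynomial (Fin m) R) :=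
  Subgroup.closure {ψ | IsLinearAut ψ ∨ IsElementaryAut ψ}

def Vsp (K : Type*) [Field K] (n i : ℕ) : Submodule K (MvPolynomial (Fin n) K) :=
  Submodule.span K (insert (1 : MvPolynomial (Fin n) K) {p | ∃ j : Fin n, (j : ℕ) < i ∧ p = X j})

def Hsub (K : Type*) [Field K] (n i : ℕ) :
    Subgroup (MvPolynomial (Fin n) K ≃ₐ[K] MvPolynomial (Fin n) K) where
  carrier := {φ | Submodule.map φ.toLinearMap (Vsp K n i) = Vsp K n i}
  one_mem' := by
    ext x
    simp [Submodule.mem_map]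
  mul_mem' := by
    intro a b ha hb
    simp only [Set.mem_setOf_eq] at ha hb ⊢
    have hab : (a * b).toLinearMap = a.toLinearMap.comp b.toLinearMap :=
      LinearMap.ext fun x => rfl
    rw [hab, Submodule.map_comp, hb, ha]
  inv_mem' := by
    intro φ h
    simp only [Set.mem_setOf_eq] at h ⊢
    conv_lhs => rw [← h]
    rw [← Submodule.map_comp]
    have hid : (φ⁻¹.toLinearMap ∘ₗ φ.toLinearMap) = LinearMap.id := by
      apply LinearMap.ext
      intro x
      simp only [LinearMap.comp_apply, AlgEquiv.toLinearMap_apply, LinearMap.id_apply]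
      rw [← AlgEquiv.mul_apply, inv_mul_cancel]
      rfl
    rw [hid, Submodule.map_id]





/-- The subgroup of automorphisms fixing `X_j` for every `j ∈ S`. -/
def FixSub (K : Type*) [Field K] (n : ℕ) (S : Set (Fin n)) :
    Subgroup (MvPolynomial (Fin n) K ≃ₐ[K] MvPolynomial (Fin n) K) where
  carrier := {φ | ∀ j ∈ S, φ (X j) = X j}
  one_mem' := fun j _ => rfl
  mul_mem' := by
    intro a b ha hb j hj
    rw [AlgEquiv.mul_apply, hb j hj, ha j hj]
  inv_mem' := by
    intro a ha j hj
    conv_lhs => rw [← ha j hj]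
    rw [← AlgEquiv.mul_apply, inv_mul_cancel]
    rfl

/-- `N`: the subgroup of `H_i` of automorphisms fixing each of `X_1, …, X_i`. -/
def Nsub (K : Type*) [Field K] (n i : ℕ) :
    Subgroup (MvPolynomial (Fin n) K ≃ₐ[K] MvPolynomial (Fin n) K) :=
  Hsub K n i ⊓ FixSub K n {j | (j : ℕ) < i}

/-- `A`: the subgroup of `H_i` of automorphisms fixing each of `X_{i+1}, …, X_n`
(its elements automatically send `X_1, …, X_i` into `V_i`, i.e. to polynomials of
degree `≤ 1` in `X_1, …, X_i`; this is the content of the first clause of the theorem). -/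
def Asub (K : Type*) [Field K] (n i : ℕ) :
    Subgroup (MvPolynomial (Fin n) K ≃ₐ[K] MvPolynomial (Fin n) K) :=
  Hsub K n i ⊓ FixSub K n {j | i ≤ (j : ℕ)}

/-- The `K[X_1,…,X_i]`-algebra structure on `K[X_1,…,X_n]`. -/
def baseAlgebra (K : Type*) [Field K] {n i : ℕ} (h : i ≤ n) :
    Algebra (MvPolynomial (Fin i) K) (MvPolynomial (Fin n) K) :=
  ((rename (Fin.castLE h)).toRingHom :
    MvPolynomial (Fin i) K →+* MvPolynomial (Fin n) K).toAlgebra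

/-- `GA_{n-i}(K[X_1,…,X_i])`: the group of `K[X_1,…,X_i]`-algebra automorphisms of
`K[X_1,…,X_n]`. -/
abbrev GAover (K : Type*) [Field K] {n i : ℕ} (h : i ≤ n) :=
  @AlgEquiv (MvPolynomial (Fin i) K) (MvPolynomial (Fin n) K) (MvPolynomial (Fin n) K)
    _ _ _ (baseAlgebra K h) (baseAlgebra K h)


section Helpers

variable {K : Type*} [Field K] {n i : ℕ}

lemma X_mem_Vsp {j : Fin n} (hj : (j:ℕ) < i) : (X j : MvPolynomial (Fin n) K) ∈ Vsp K n i :=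
  Submodule.subset_span (Set.mem_insert_iff.mpr (Or.inr ⟨j, hj, rfl⟩))

lemma mem_Hsub_iff {φ : MvPolynomial (Fin n) K ≃ₐ[K] MvPolynomial (Fin n) K} :
    φ ∈ Hsub K n i ↔ Submodule.map φ.toLinearMap (Vsp K n i) = Vsp K n i := Iff.rfl

lemma apply_mem_Vsp {φ : MvPolynomial (Fin n) K ≃ₐ[K] MvPolynomial (Fin n) K}
    (hφ : φ ∈ Hsub K n i) {v : MvPolynomial (Fin n) K} (hv : v ∈ Vsp K n i) :
    φ v ∈ Vsp K n i := by
  have h : φ.toLinearMap v ∈ Submodule.map φ.toLinearMap (Vsp K n i) :=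
    Submodule.mem_map_of_mem hv
  rwa [mem_Hsub_iff.mp hφ] at h

lemma agree_on_Vsp {f g : MvPolynomial (Fin n) K →ₐ[K] MvPolynomial (Fin n) K}
    (h : ∀ j : Fin n, (j:ℕ) < i → f (X j) = g (X j)) {v : MvPolynomial (Fin n) K}
    (hv : v ∈ Vsp K n i) : f v = g v := by
  induction hv using Submodule.span_induction with
  | mem x hx =>
    rcases hx with rfl | ⟨j, hj, rfl⟩
    · simp
    · exact h j hj
  | zero => simp
  | add x y _ _ hx hy => simp [hx, hy]
  | smul c x _ hx => simp [hx]

lemma map_Vsp_eq {φ ψ : MvPolynomial (Fin n) K ≃ₐ[K] MvPolynomial (Fin n) K}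
    (h : ∀ j : Fin n, (j:ℕ) < i → φ (X j) = ψ (X j)) :
    Submodule.map φ.toLinearMap (Vsp K n i) = Submodule.map ψ.toLinearMap (Vsp K n i) := by
  unfold Vsp
  rw [Submodule.map_span, Submodule.map_span]
  congr 1
  apply Set.image_congr
  rintro x (rfl | ⟨j, hj, rfl⟩)
  · simp
  · exact h j hj

lemma mem_Hsub_of_fix {φ : MvPolynomial (Fin n) K ≃ₐ[K] MvPolynomial (Fin n) K}
    (h : ∀ j : Fin n, (j:ℕ) < i → φ (X j) = X j) : φ ∈ Hsub K n i := by
  rw [mem_Hsub_iff]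
  rw [map_Vsp_eq (ψ := (1 : MvPolynomial (Fin n) K ≃ₐ[K] MvPolynomial (Fin n) K)) h]
  ext x; simp [Submodule.mem_map]

open Classical in
def aPartHom (i : ℕ) (φ : MvPolynomial (Fin n) K ≃ₐ[K] MvPolynomial (Fin n) K) :
    MvPolynomial (Fin n) K →ₐ[K] MvPolynomial (Fin n) K :=
  aeval (fun j => if (j:ℕ) < i then φ (X j) else X j)

lemma aPartHom_X (φ : MvPolynomial (Fin n) K ≃ₐ[K] MvPolynomial (Fin n) K) (j : Fin n) :
    aPartHom i φ (X j) = if (j:ℕ) < i then φ (X j) else X j := by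
  simp [aPartHom]

lemma aPart_comp {φ : MvPolynomial (Fin n) K ≃ₐ[K] MvPolynomial (Fin n) K}
    (hφ : φ ∈ Hsub K n i) :
    (aPartHom i φ).comp (aPartHom i φ.symm) = AlgHom.id K _ := by
  apply algHom_ext
  intro j
  simp only [AlgHom.comp_apply, AlgHom.id_apply, aPartHom_X]
  by_cases hj : (j:ℕ) < i
  · rw [if_pos hj]
    have hsymm : φ.symm ∈ Hsub K n i := (Hsub K n i).inv_mem hφ
    have hmem : φ.symm (X j) ∈ Vsp K n i := apply_mem_Vsp hsymm (X_mem_Vsp hj)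
    have hag := agree_on_Vsp (f := aPartHom i φ) (g := φ.toAlgHom)
      (fun k hk => by rw [aPartHom_X, if_pos hk]; rfl) hmem
    rw [hag]
    exact φ.apply_symm_apply (X j)
  · rw [if_neg hj, aPartHom_X, if_neg hj]

def aPart (φ : MvPolynomial (Fin n) K ≃ₐ[K] MvPolynomial (Fin n) K)
    (hφ : φ ∈ Hsub K n i) : MvPolynomial (Fin n) K ≃ₐ[K] MvPolynomial (Fin n) K :=
  AlgEquiv.ofAlgHom (aPartHom i φ) (aPartHom i φ.symm) (aPart_comp hφ)
    (by
      have h := aPart_comp (φ := φ.symm) ((Hsub K n i).inv_mem hφ)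
      rwa [AlgEquiv.symm_symm] at h)

lemma aPart_X (φ : MvPolynomial (Fin n) K ≃ₐ[K] MvPolynomial (Fin n) K)
    (hφ : φ ∈ Hsub K n i) (j : Fin n) :
    aPart φ hφ (X j) = if (j:ℕ) < i then φ (X j) else X j := aPartHom_X φ j

def toNfun (hin : i ≤ n) (ψ : GAover K hin) :
    MvPolynomial (Fin n) K ≃ₐ[K] MvPolynomial (Fin n) K :=
  letI := baseAlgebra K hin
  { ψ.toRingEquiv with
    commutes' := fun k => by
      have h1 : (algebraMap K (MvPolynomial (Fin n) K)) k =
          algebraMap (MvPolynomial (Fin i) K) (MvPolynomial (Fin n) K) (C k) := by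
        show _ = rename (Fin.castLE hin) (C k)
        simp [algebraMap_eq]
      show ψ _ = _
      rw [h1, ψ.commutes] }

lemma toNfun_apply (hin : i ≤ n) (ψ : GAover K hin) (x : MvPolynomial (Fin n) K) :
    toNfun hin ψ x = ψ x := rfl

lemma toNfun_fix (hin : i ≤ n) (ψ : GAover K hin) (j : Fin n) (hj : (j:ℕ) < i) :
    toNfun hin ψ (X j) = X j := by
  letI := baseAlgebra K hin
  have h1 : (X j : MvPolynomial (Fin n) K) =
      algebraMap (MvPolynomial (Fin i) K) (MvPolynomial (Fin n) K) (X ⟨j.1, hj⟩) := by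
    show _ = rename (Fin.castLE hin) (X ⟨j.1, hj⟩)
    rw [rename_X]
    rfl
  rw [toNfun_apply, h1, ψ.commutes]

def ofNfun (hin : i ≤ n) (x : MvPolynomial (Fin n) K ≃ₐ[K] MvPolynomial (Fin n) K)
    (hx : ∀ j : Fin n, (j:ℕ) < i → x (X j) = X j) : GAover K hin :=
  letI := baseAlgebra K hin
  { x.toRingEquiv with
    commutes' := fun p => by
      show x (rename (Fin.castLE hin) p) = rename (Fin.castLE hin) p
      have h : (x.toAlgHom.comp (rename (Fin.castLE hin)) :
          MvPolynomial (Fin i) K →ₐ[K] MvPolynomial (Fin n) K) = rename (Fin.castLE hin) := by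
        apply algHom_ext
        intro j
        simp only [AlgHom.comp_apply, rename_X]
        exact hx (Fin.castLE hin j) j.isLt
      exact AlgHom.congr_fun h p }

def eIso (hin : i ≤ n) : GAover K hin ≃* ↥(Nsub K n i) where
  toFun ψ := ⟨toNfun hin ψ, Subgroup.mem_inf.mpr ⟨mem_Hsub_of_fix (toNfun_fix hin ψ),
    fun j hj => toNfun_fix hin ψ j hj⟩⟩
  invFun x := ofNfun hin x.1 fun j hj => (Subgroup.mem_inf.mp x.2).2 j hj
  left_inv ψ := by
    letI := baseAlgebra K hin
    exact AlgEquiv.ext fun p => rfl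
  right_inv x := Subtype.ext (AlgEquiv.ext fun p => rfl)
  map_mul' a b := Subtype.ext (AlgEquiv.ext fun p => rfl)

end Helpers

/-- `H_i = Af_i(K) ⋉ GA_{n-i}(K[X_1,…,X_i])`. -/
theorem statement_7 {K : Type*} [Field K] {n i : ℕ} (h1 : 1 ≤ i) (hin : i ≤ n) :
    (∀ φ, φ ∈ Asub K n i ↔ φ ∈ Hsub K n i ∧
        (∀ j : Fin n, (j : ℕ) < i → φ (X j) ∈ Vsp K n i) ∧
        (∀ j : Fin n, i ≤ (j : ℕ) → φ (X j) = X j)) ∧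
    Nsub K n i ≤ Hsub K n i ∧ Asub K n i ≤ Hsub K n i ∧
    (∀ h ∈ Hsub K n i, ∀ x ∈ Nsub K n i, h * x * h⁻¹ ∈ Nsub K n i) ∧
    Nsub K n i ⊓ Asub K n i = ⊥ ∧
    (∀ φ ∈ Hsub K n i, ∃! p : (MvPolynomial (Fin n) K ≃ₐ[K] MvPolynomial (Fin n) K) ×
        (MvPolynomial (Fin n) K ≃ₐ[K] MvPolynomial (Fin n) K),
      p.1 ∈ Asub K n i ∧ p.2 ∈ Nsub K n i ∧ p.1 * p.2 = φ) ∧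
    ∃ e : GAover K hin ≃* ↥(Nsub K n i),
      ∀ (ψ : GAover K hin) (x : MvPolynomial (Fin n) K),
        (↑(e ψ) : MvPolynomial (Fin n) K ≃ₐ[K] MvPolynomial (Fin n) K) x = ψ x := by
  have hbot : Nsub K n i ⊓ Asub K n i = ⊥ := by
    rw [eq_bot_iff]
    intro φ hφ
    obtain ⟨hφN, hφA⟩ := hφ
    obtain ⟨-, hN⟩ := Subgroup.mem_inf.mp hφN
    obtain ⟨-, hA⟩ := Subgroup.mem_inf.mp hφA
    have hall : ∀ j, φ (X j) = X j := fun j => by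
      by_cases hj : (j:ℕ) < i
      · exact hN j hj
      · exact hA j (le_of_not_gt hj)
    have heq : φ.toAlgHom = AlgHom.id K (MvPolynomial (Fin n) K) :=
      algHom_ext fun j => by simpa using hall j
    rw [Subgroup.mem_bot]
    apply AlgEquiv.ext
    intro p
    simpa using AlgHom.congr_fun heq p
  refine ⟨?_, inf_le_left, inf_le_left, ?_, hbot, ?_, ?_⟩
  · intro φ
    constructor
    · intro hφ
      obtain ⟨hH, hfix⟩ := Subgroup.mem_inf.mp hφ
      exact ⟨hH, fun j hj => apply_mem_Vsp hH (X_mem_Vsp hj), fun j hj => hfix j hj⟩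
    · rintro ⟨hH, -, hfix⟩
      exact Subgroup.mem_inf.mpr ⟨hH, fun j hj => hfix j hj⟩
  · intro h hh x hx
    obtain ⟨hxH, hxF⟩ := Subgroup.mem_inf.mp hx
    refine Subgroup.mem_inf.mpr ⟨mul_mem (mul_mem hh hxH) (inv_mem hh), ?_⟩
    intro j hj
    have h1 : h⁻¹ (X j) ∈ Vsp K n i := apply_mem_Vsp (inv_mem hh) (X_mem_Vsp hj)
    have h2 : x (h⁻¹ (X j)) = h⁻¹ (X j) := by
      have hag := agree_on_Vsp (f := x.toAlgHom)
        (g := AlgHom.id K (MvPolynomial (Fin n) K)) (fun k hk => by simpa using hxF k hk) h1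
      simpa using hag
    show h (x (h⁻¹ (X j))) = X j
    rw [h2]
    show (h * h⁻¹) (X j) = X j
    rw [mul_inv_cancel]
    rfl
  · intro φ hφ
    set a := aPart φ hφ with ha_def
    have haA : a ∈ Asub K n i := by
      refine Subgroup.mem_inf.mpr ⟨?_, ?_⟩
      · rw [mem_Hsub_iff, map_Vsp_eq (ψ := φ) (fun j hj => by rw [ha_def, aPart_X]; exact if_pos hj)]
        exact mem_Hsub_iff.mp hφ
      · intro j hj
        rw [ha_def, aPart_X]; exact if_neg (not_lt.mpr hj)
    have haH : a ∈ Hsub K n i := (Subgroup.mem_inf.mp haA).1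
    have hxN : a⁻¹ * φ ∈ Nsub K n i := by
      refine Subgroup.mem_inf.mpr ⟨mul_mem (inv_mem haH) hφ, ?_⟩
      intro j hj
      have key : a (X j) = φ (X j) := by rw [ha_def, aPart_X]; exact if_pos hj
      show a.symm (φ (X j)) = X j
      rw [← key]
      exact a.symm_apply_apply (X j)
    refine ⟨(a, a⁻¹ * φ), ⟨haA, hxN, by rw [← mul_assoc, mul_inv_cancel, one_mul]⟩, ?_⟩
    rintro ⟨a', x'⟩ ⟨ha', hx', heq⟩
    have he : a⁻¹ * a' ∈ Nsub K n i ⊓ Asub K n i := by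
      refine Subgroup.mem_inf.mpr ⟨?_, ?_⟩
      · have ha'eq : a' = φ * x'⁻¹ := by
          rw [← heq, mul_assoc, mul_inv_cancel, mul_one]
        rw [ha'eq, ← mul_assoc]
        exact mul_mem hxN ((Nsub K n i).inv_mem hx')
      · exact mul_mem ((Asub K n i).inv_mem haA) ha'
    have he1 : a⁻¹ * a' = 1 := by
      rw [hbot] at he
      simpa [Subgroup.mem_bot] using he
    have hh1 : a' = a := (inv_mul_eq_one.mp he1).symm
    have hh2 : x' = a⁻¹ * φ := by rw [← heq, hh1, ← mul_assoc, inv_mul_cancel, one_mul]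
    rw [hh1, hh2]
  · exact ⟨eIso hin, fun ψ x => rfl⟩


end
end

section
/- Let K be a field and n ≥ 2. Then H_{n−1} ⊆ TA_n(K), i.e., every K-algebra automorphism of K[X_1,…,X_n] that stabilizes the subspace V_{n−1} = K ⊕ KX_1 ⊕ ⋯ ⊕ KX_{n−1} is a tame automorphism. Hence Ĥ_{n−1} = H_{n−1}. -/
open MvPolynomial

noncomputable section

section TameAux

variable {K : Type*} [Field K] {n : ℕ}

/-- Generic builder of algebra automorphisms of `MvPolynomial` from a substitution
with explicit inverse substitution. -/
def mkAut (u v : Fin n → MvPolynomial (Fin n) K)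
    (huv : ∀ j, aeval u (v j) = X j) (hvu : ∀ j, aeval v (u j) = X j) :
    MvPolynomial (Fin n) K ≃ₐ[K] MvPolynomial (Fin n) K :=
  AlgEquiv.ofAlgHom (aeval u) (aeval v)
    (by rw [comp_aeval]
        have h : (fun j => aeval u (v j)) = X := funext huv
        rw [h, aeval_X_left])
    (by rw [comp_aeval]
        have h : (fun j => aeval v (u j)) = X := funext hvu
        rw [h, aeval_X_left])

@[simp] lemma mkAut_apply (u v : Fin n → MvPolynomial (Fin n) K) (huv hvu) (p) :
    mkAut u v huv hvu p = aeval u p := rfl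

lemma algEquiv_ext' {φ ψ : MvPolynomial (Fin n) K ≃ₐ[K] MvPolynomial (Fin n) K}
    (h : ∀ j, φ (X j) = ψ (X j)) : φ = ψ := by
  have := MvPolynomial.algHom_ext (f := φ.toAlgHom) (g := ψ.toAlgHom) h
  exact AlgEquiv.ext fun p => AlgHom.congr_fun this p


def linMap (M : Matrix (Fin n) (Fin n) K) : Fin n → MvPolynomial (Fin n) K :=
  fun j => ∑ k, C (M j k) * X k

lemma aeval_linMap_linMap (M N : Matrix (Fin n) (Fin n) K) (j : Fin n) :
    aeval (linMap M) (linMap N j) = linMap (N * M) j := by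
  simp only [linMap, map_sum, map_mul, aeval_C, aeval_X, algebraMap_eq, Matrix.mul_apply,
    Finset.mul_sum, Finset.sum_mul, C_mul, mul_assoc]
  exact Finset.sum_comm

lemma linMap_one (j : Fin n) : linMap (1 : Matrix (Fin n) (Fin n) K) j = X j := by
  classical
  rw [linMap, Finset.sum_eq_single j]
  · simp
  · intro k _ hk
    simp [Matrix.one_apply_ne (Ne.symm hk)]
  · simp

def linAut (M : Matrix.GeneralLinearGroup (Fin n) K) :
    MvPolynomial (Fin n) K ≃ₐ[K] MvPolynomial (Fin n) K :=
  mkAut (linMap (M : Matrix (Fin n) (Fin n) K)) (linMap ((M⁻¹ : Matrix.GeneralLinearGroup (Fin n) K) : Matrix (Fin n) (Fin n) K))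
    (fun j => by
      rw [aeval_linMap_linMap]
      have h1 : ((M⁻¹ : Matrix.GeneralLinearGroup (Fin n) K) : Matrix (Fin n) (Fin n) K) * M = 1 := by
        rw [← Units.val_mul, inv_mul_cancel, Units.val_one]
      rw [h1, linMap_one])
    (fun j => by
      rw [aeval_linMap_linMap]
      have h1 : (M : Matrix (Fin n) (Fin n) K) * ((M⁻¹ : Matrix.GeneralLinearGroup (Fin n) K) : Matrix (Fin n) (Fin n) K) = 1 := by
        rw [← Units.val_mul, mul_inv_cancel, Units.val_one]
      rw [h1, linMap_one])

lemma linAut_X (M : Matrix.GeneralLinearGroup (Fin n) K) (j : Fin n) :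
    linAut M (X j) = ∑ k, C ((M : Matrix (Fin n) (Fin n) K) j k) * X k := by
  show aeval _ (X j) = _
  rw [aeval_X]; rfl

lemma linAut_isLinear (M : Matrix.GeneralLinearGroup (Fin n) K) : IsLinearAut (linAut M) :=
  ⟨M, linAut_X M⟩

def transAut (c : Fin n → K) : MvPolynomial (Fin n) K ≃ₐ[K] MvPolynomial (Fin n) K :=
  mkAut (fun j => X j + C (c j)) (fun j => X j - C (c j))
    (fun j => by simp) (fun j => by simp)

@[simp] lemma transAut_X (c : Fin n → K) (j : Fin n) : transAut c (X j) = X j + C (c j) := by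
  show aeval _ (X j) = _
  rw [aeval_X]

lemma transAut_add (c d : Fin n → K) : transAut (c + d) = transAut c * transAut d := by
  refine algEquiv_ext' fun j => ?_
  rw [transAut_X, AlgEquiv.mul_apply, transAut_X, map_add, transAut_X, ← algebraMap_eq,
    AlgEquiv.commutes, algebraMap_eq, Pi.add_apply, C_add, add_assoc]

lemma transAut_zero : transAut (0 : Fin n → K) = 1 := by
  refine algEquiv_ext' fun j => ?_
  simp

def elemAut (i : Fin n) (g : MvPolynomial (Fin n) K) (hg : i ∉ g.vars) :
    MvPolynomial (Fin n) K ≃ₐ[K] MvPolynomial (Fin n) K :=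
  mkAut (Function.update X i (X i + g)) (Function.update X i (X i - g))
    (fun j => by
      rcases eq_or_ne j i with rfl | hj
      · rw [Function.update_self, map_sub, aeval_update_of_not_mem_vars hg]
        simp [Function.update_self]
      · rw [Function.update_of_ne hj, aeval_X, Function.update_of_ne hj])
    (fun j => by
      rcases eq_or_ne j i with rfl | hj
      · rw [Function.update_self, map_add, aeval_update_of_not_mem_vars hg]
        simp [Function.update_self]
      · rw [Function.update_of_ne hj, aeval_X, Function.update_of_ne hj])

lemma elemAut_X_self (i : Fin n) (g : MvPolynomial (Fin n) K) (hg : i ∉ g.vars) : elemAut i g hg (X i) = X i + g := by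
  simp only [elemAut, mkAut_apply, aeval_X, Function.update_self]

lemma elemAut_X_ne (i : Fin n) (g : MvPolynomial (Fin n) K) (hg : i ∉ g.vars) (k : Fin n) (hk : k ≠ i) :
    elemAut i g hg (X k) = X k := by
  simp only [elemAut, mkAut_apply, aeval_X, Function.update_of_ne hk]

lemma linAut_mem (M : Matrix.GeneralLinearGroup (Fin n) K) : linAut M ∈ TameGroup K n :=
  Subgroup.subset_closure (Or.inl (linAut_isLinear M))

lemma elemAut_mem (i : Fin n) (g : MvPolynomial (Fin n) K) (hg : i ∉ g.vars) :
    elemAut i g hg ∈ TameGroup K n :=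
  Subgroup.subset_closure (Or.inr ⟨i, g, hg, elemAut_X_self i g hg, elemAut_X_ne i g hg⟩)

lemma transAut_single_mem (j : Fin n) (a : K) :
    transAut (Pi.single j a) ∈ TameGroup K n := by
  refine Subgroup.subset_closure (Or.inr ⟨j, C a, ?_, ?_, ?_⟩)
  · simp [vars_C]
  · rw [transAut_X, Pi.single_eq_same]
  · intro k hk
    rw [transAut_X, Pi.single_eq_of_ne hk, map_zero, add_zero]

lemma transAut_mem (c : Fin n → K) : transAut c ∈ TameGroup K n := by
  classical
  have key : ∀ s : Finset (Fin n), transAut (∑ j ∈ s, Pi.single j (c j)) ∈ TameGroup K n := by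
    intro s
    induction s using Finset.induction_on with
    | empty => rw [Finset.sum_empty, transAut_zero]; exact one_mem _
    | insert _ _ h ih =>
        rw [Finset.sum_insert h, transAut_add]
        exact mul_mem (transAut_single_mem _ _) ih
  have := key Finset.univ
  rwa [Finset.univ_sum_single] at this

lemma algEquiv_C (φ : MvPolynomial (Fin n) K ≃ₐ[K] MvPolynomial (Fin n) K) (r : K) :
    φ (C r) = C r := by
  rw [← algebraMap_eq]; exact φ.commutes r

lemma linMap_diagonal (d : Fin n → K) (j : Fin n) :
    linMap (Matrix.diagonal d) j = C (d j) * X j := by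
  classical
  rw [linMap, Finset.sum_eq_single j]
  · rw [Matrix.diagonal_apply_eq]
  · intro k _ hk
    rw [Matrix.diagonal_apply_ne _ (Ne.symm hk), map_zero, zero_mul]
  · simp

lemma mem_tame_of_fix_others (ψ : MvPolynomial (Fin n) K ≃ₐ[K] MvPolynomial (Fin n) K)
    (i : Fin n) (a : K) (ha : a ≠ 0) (f : MvPolynomial (Fin n) K) (hf : i ∉ f.vars)
    (hXi : ψ (X i) = C a * X i + f) (hk : ∀ k, k ≠ i → ψ (X k) = X k) :
    ψ ∈ TameGroup K n := by
  classical
  set d : Fin n → K := Function.update (1 : Fin n → K) i a with hd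
  have hdet : (Matrix.diagonal d).det ≠ 0 := by
    rw [Matrix.det_diagonal, Finset.prod_update_of_mem (Finset.mem_univ i)]
    simp [ha]
  set M := Matrix.GeneralLinearGroup.mkOfDetNeZero (Matrix.diagonal d) hdet with hM
  have hMc : (M : Matrix (Fin n) (Fin n) K) = Matrix.diagonal d := rfl
  have hfg : i ∉ (C a⁻¹ * f).vars := by
    rw [vars_C_mul _ (inv_ne_zero ha)]
    exact hf
  have hψ : ψ = elemAut i (C a⁻¹ * f) hfg * linAut M := by
    refine algEquiv_ext' fun j => ?_
    rw [AlgEquiv.mul_apply, linAut_X, hMc]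
    have : (∑ k, C (Matrix.diagonal d j k) * X k) = C (d j) * X j := by
      rw [← linMap_diagonal]; rfl
    rw [this, map_mul, algEquiv_C]
    rcases eq_or_ne j i with rfl | hj
    · rw [elemAut_X_self, hXi, hd, Function.update_self, mul_add, ← mul_assoc, ← C_mul,
        mul_inv_cancel₀ ha, C_1, one_mul]
    · rw [elemAut_X_ne _ _ _ _ hj, hk j hj, hd, Function.update_of_ne hj, Pi.one_apply, C_1,
        one_mul]
  rw [hψ]
  exact mul_mem (elemAut_mem _ _ _) (linAut_mem M)

lemma mv_isUnit : ∀ (m : ℕ) (u : MvPolynomial (Fin m) K), IsUnit u →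
    ∃ c : K, c ≠ 0 ∧ u = C c := by
  intro m
  induction m with
  | zero =>
      intro u hu
      refine ⟨u.coeff 0, ?_, eq_C_of_isEmpty u⟩
      intro h0
      have : u = 0 := by rw [eq_C_of_isEmpty u, h0, C_0]
      exact hu.ne_zero this
  | succ m ih =>
      intro u hu
      set F := finSuccEquiv K m with hF
      have hvu : IsUnit (F u) := hu.map F
      obtain ⟨r, hr, hru⟩ := Polynomial.isUnit_iff.mp hvu
      obtain ⟨c, hc, rfl⟩ := ih r hr
      refine ⟨c, hc, ?_⟩
      have : u = F.symm (Polynomial.C (C c)) := by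
        rw [hru, AlgEquiv.symm_apply_apply]
      rw [this]
      exact RingHom.congr_fun (finSuccEquiv_comp_C_eq_C m) c

lemma shape_zero {m : ℕ} (ψ : MvPolynomial (Fin (m + 1)) K ≃ₐ[K] MvPolynomial (Fin (m + 1)) K)
    (hk : ∀ k, k ≠ 0 → ψ (X k) = X k) :
    ∃ a : K, a ≠ 0 ∧ ∃ f : MvPolynomial (Fin (m + 1)) K,
      (0 : Fin (m + 1)) ∉ f.vars ∧ ψ (X 0) = C a * X 0 + f := by
  classical
  set R := MvPolynomial (Fin m) K
  set F := finSuccEquiv K m with hF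
  set Φ : Polynomial R ≃ₐ[K] Polynomial R := (F.symm.trans ψ).trans F with hΦdef
  have hΦ_apply : ∀ t, Φ t = F (ψ (F.symm t)) := fun t => rfl
  -- F.symm ∘ Polynomial.C = rename Fin.succ as ring homs
  have hsymmC : ∀ r : R, F.symm (Polynomial.C r) = rename Fin.succ r := by
    have : (↑F.symm : Polynomial R →+* MvPolynomial (Fin (m + 1)) K).comp Polynomial.C
        = (rename (Fin.succ) : MvPolynomial (Fin m) K →ₐ[K] _).toRingHom := by
      apply MvPolynomial.ringHom_ext
      · intro c
        have := RingHom.congr_fun (finSuccEquiv_comp_C_eq_C m) c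
        simpa using this
      · intro j
        have h1 : F (X j.succ) = Polynomial.C (X j) := finSuccEquiv_X_succ
        have : F.symm (Polynomial.C (X j)) = X j.succ := by
          rw [← h1, AlgEquiv.symm_apply_apply]
        simpa using this
    intro r
    exact RingHom.congr_fun this r
  -- Φ fixes constants
  have hC : ∀ r : R, Φ (Polynomial.C r) = Polynomial.C r := by
    have key : ((↑Φ : Polynomial R →+* Polynomial R).comp Polynomial.C) = Polynomial.C := by
      apply MvPolynomial.ringHom_ext
      · intro c
        have h1 : F.symm (Polynomial.C (C c)) = C c := by
          rw [hsymmC, rename_C]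
        simp only [RingHom.comp_apply, RingHom.coe_coe, hΦ_apply, h1]
        rw [algEquiv_C ψ c]
        have : F (C c) = Polynomial.C (C c) := by
          rw [← h1, AlgEquiv.apply_symm_apply]
        rw [this]
      · intro j
        have h1 : F.symm (Polynomial.C (X j)) = X j.succ := by
          rw [hsymmC, rename_X]
        simp only [RingHom.comp_apply, RingHom.coe_coe, hΦ_apply, h1]
        rw [hk _ (Fin.succ_ne_zero j), finSuccEquiv_X_succ]
    intro r
    exact RingHom.congr_fun key r
  have hC' : ∀ r : R, Φ.symm (Polynomial.C r) = Polynomial.C r := by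
    intro r
    conv_lhs => rw [← hC r]
    rw [AlgEquiv.symm_apply_apply]
  set p := Φ Polynomial.X with hp
  set q := Φ.symm Polynomial.X with hq
  -- Φ t = t.comp p  (as ring homs agree on C and X)
  have hΦcomp : ∀ t : Polynomial R, Φ t = t.comp p := by
    have : (↑Φ : Polynomial R →+* Polynomial R) = Polynomial.eval₂RingHom Polynomial.C p := by
      apply Polynomial.ringHom_ext
      · intro r; simp [hC r]
      · simp [hp]
    intro t
    have := RingHom.congr_fun this t
    simpa [Polynomial.comp] using this
  have hΦ'comp : ∀ t : Polynomial R, Φ.symm t = t.comp q := by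
    have : (↑Φ.symm : Polynomial R →+* Polynomial R) = Polynomial.eval₂RingHom Polynomial.C q := by
      apply Polynomial.ringHom_ext
      · intro r; simp [hC' r]
      · simp [hq]
    intro t
    have := RingHom.congr_fun this t
    simpa [Polynomial.comp] using this
  have hqp : q.comp p = Polynomial.X := by
    rw [← hΦcomp q, hq, AlgEquiv.apply_symm_apply]
  have hdeg : q.natDegree * p.natDegree = 1 := by
    have := congrArg Polynomial.natDegree hqp
    rwa [Polynomial.natDegree_comp, Polynomial.natDegree_X] at this
  have hpdeg : p.natDegree = 1 := Nat.eq_one_of_mul_eq_one_left hdeg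
  have hqdeg : q.natDegree = 1 := Nat.eq_one_of_mul_eq_one_right hdeg
  obtain ⟨a', ha', b, hpeq⟩ := Polynomial.natDegree_eq_one.mp hpdeg
  obtain ⟨a'', ha'', b', hqeq⟩ := Polynomial.natDegree_eq_one.mp hqdeg
  -- coefficient of X in q.comp p gives a'' * a' = 1
  have hunit : IsUnit a' := by
    have h1 : q.comp p = Polynomial.C a'' * p + Polynomial.C b' := by
      rw [← hqeq]
      simp [Polynomial.add_comp, Polynomial.mul_comp, Polynomial.C_comp, Polynomial.X_comp]
    have h2 : (q.comp p).coeff 1 = a'' * a' := by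
      rw [h1, ← hpeq]
      simp [Polynomial.coeff_add, Polynomial.coeff_C_mul, Polynomial.coeff_C, mul_add,
        Polynomial.coeff_X_one]
    rw [hqp, Polynomial.coeff_X_one] at h2
    exact IsUnit.of_mul_eq_one a'' (by rw [mul_comm]; exact h2.symm)
  obtain ⟨c, hc, rfl⟩ := mv_isUnit m a' hunit
  refine ⟨c, hc, rename Fin.succ b, ?_, ?_⟩
  · intro h0
    obtain ⟨x, _, hx⟩ := mem_vars_rename _ _ h0
    exact Fin.succ_ne_zero x hx
  · have hX0 : F.symm Polynomial.X = X (0 : Fin (m + 1)) := by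
      rw [← finSuccEquiv_X_zero (n := m) (R := K), AlgEquiv.symm_apply_apply]
    have h1 : ψ (X 0) = F.symm p := by
      rw [hp, hΦ_apply, AlgEquiv.symm_apply_apply, hX0]
    rw [h1, ← hpeq, map_add, map_mul, hsymmC, rename_C, hX0, hsymmC]

lemma shape {m : ℕ} (ψ : MvPolynomial (Fin (m + 1)) K ≃ₐ[K] MvPolynomial (Fin (m + 1)) K)
    (i : Fin (m + 1)) (hk : ∀ k, k ≠ i → ψ (X k) = X k) :
    ∃ a : K, a ≠ 0 ∧ ∃ f : MvPolynomial (Fin (m + 1)) K,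
      i ∉ f.vars ∧ ψ (X i) = C a * X i + f := by
  classical
  set σ : Equiv.Perm (Fin (m + 1)) := Equiv.swap 0 i with hσ
  set e := (renameEquiv K σ : MvPolynomial (Fin (m + 1)) K ≃ₐ[K] MvPolynomial (Fin (m + 1)) K)
    with he
  set ψ' := (e.trans ψ).trans e.symm with hψ'
  have hψ'_apply : ∀ t, ψ' t = e.symm (ψ (e t)) := fun t => rfl
  have heX : ∀ k, e (X k) = X (σ k) := fun k => by rw [he, renameEquiv_apply, rename_X]
  have heX' : ∀ k, e.symm (X k) = X (σ k) := fun k => by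
    have h2 : e (X (σ k)) = X k := by rw [heX, Equiv.swap_apply_self]
    rw [← h2, AlgEquiv.symm_apply_apply]
  have hψ'k : ∀ k, k ≠ 0 → ψ' (X k) = X k := by
    intro k hk0
    have hσk : σ k ≠ i := by
      intro h
      apply hk0
      have := congrArg σ h
      rwa [Equiv.swap_apply_self, Equiv.swap_apply_right] at this
    rw [hψ'_apply, heX, hk _ hσk, heX', Equiv.swap_apply_self]
  obtain ⟨a, ha, f', hf', heq⟩ := shape_zero ψ' hψ'k
  refine ⟨a, ha, rename σ f', ?_, ?_⟩
  · intro hmem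
    obtain ⟨x, hx, hxi⟩ := mem_vars_rename _ _ hmem
    have : x = 0 := by
      have := congrArg σ hxi
      rwa [Equiv.swap_apply_self, Equiv.swap_apply_right] at this
    exact hf' (this ▸ hx)
  · have h0 : ψ (X i) = e (ψ' (X 0)) := by
      rw [hψ'_apply, AlgEquiv.apply_symm_apply, heX, Equiv.swap_apply_left]
    rw [h0, heq, map_add, map_mul, algEquiv_C, heX, Equiv.swap_apply_left, he, renameEquiv_apply]

lemma mem_V_decomp {i : ℕ} {p : MvPolynomial (Fin n) K} (hp : p ∈ Vsp K n i) :
    ∃ (c : K) (a : Fin n → K), (∀ k : Fin n, ¬((k : ℕ) < i) → a k = 0) ∧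
      p = C c + ∑ k, C (a k) * X k := by
  classical
  refine Submodule.span_induction ?_ ?_ ?_ ?_ hp
  · rintro x (rfl | ⟨j, hj, rfl⟩)
    · exact ⟨1, 0, fun k _ => rfl, by simp⟩
    · refine ⟨0, Pi.single j 1, ?_, ?_⟩
      · intro k hk
        have : k ≠ j := fun h => hk (h ▸ hj)
        exact Pi.single_eq_of_ne this 1
      · rw [C_0, zero_add, Finset.sum_eq_single j]
        · rw [Pi.single_eq_same, C_1, one_mul]
        · intro k _ hkj
          rw [Pi.single_eq_of_ne hkj, C_0, zero_mul]
        · simp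
  · exact ⟨0, 0, fun k _ => rfl, by simp⟩
  · rintro x y _ _ ⟨c₁, a₁, h₁, rfl⟩ ⟨c₂, a₂, h₂, rfl⟩
    refine ⟨c₁ + c₂, a₁ + a₂, fun k hk => by rw [Pi.add_apply, h₁ k hk, h₂ k hk, add_zero], ?_⟩
    have : ∀ k : Fin n, C ((a₁ + a₂) k) * X k = C (a₁ k) * X k + C (a₂ k) * X k := by
      intro k; rw [Pi.add_apply, C_add, add_mul]
    rw [C_add, Finset.sum_congr rfl fun k _ => this k, Finset.sum_add_distrib]
    ring
  · rintro r x _ ⟨c₁, a₁, h₁, rfl⟩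
    refine ⟨r * c₁, r • a₁, fun k hk => by rw [Pi.smul_apply, h₁ k hk, smul_zero], ?_⟩
    rw [smul_eq_C_mul, mul_add, C_mul, Finset.mul_sum]
    congr 1
    refine Finset.sum_congr rfl fun k _ => ?_
    rw [Pi.smul_apply, smul_eq_mul, C_mul, mul_assoc]

theorem statement_9_aux {K : Type*} [Field K] {n : ℕ} (hn : 2 ≤ n) :
    Hsub K n (n - 1) ≤ TameGroup K n ∧
    Hsub K n (n - 1) ⊓ TameGroup K n = Hsub K n (n - 1) := by
  classical
  have main : Hsub K n (n - 1) ≤ TameGroup K n := by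
    obtain ⟨m, rfl⟩ : ∃ m, n = m + 1 := ⟨n - 1, by omega⟩
    intro φ hφ
    have hφV : Submodule.map φ.toLinearMap (Vsp K (m + 1) m) = Vsp K (m + 1) m := by
      have : Submodule.map φ.toLinearMap (Vsp K (m + 1) (m + 1 - 1)) = Vsp K (m + 1) (m + 1 - 1) :=
        hφ
      simpa using this
    set last : Fin (m + 1) := ⟨m, Nat.lt_succ_self m⟩ with hlastdef
    have hlastval : (last : ℕ) = m := rfl
    -- affine data for the first m variables
    have hXmem : ∀ j : Fin (m + 1), (j : ℕ) < m → φ (X j) ∈ Vsp K (m + 1) m := by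
      intro j hj
      rw [← hφV]
      have : (X j : MvPolynomial (Fin (m + 1)) K) ∈ Vsp K (m + 1) m :=
        Submodule.subset_span (Set.mem_insert_iff.mpr (Or.inr ⟨j, hj, rfl⟩))
      exact ⟨X j, this, rfl⟩
    have hdec : ∀ j : Fin (m + 1), ∃ (c : K) (a : Fin (m + 1) → K),
        (∀ k : Fin (m + 1), ¬((k : ℕ) < m) → a k = 0) ∧
        ((j : ℕ) < m → φ (X j) = C c + ∑ k, C (a k) * X k) := by
      intro j
      by_cases hj : (j : ℕ) < m
      · obtain ⟨c, a, ha, heq⟩ := mem_V_decomp (hXmem j hj)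
        exact ⟨c, a, ha, fun _ => heq⟩
      · exact ⟨0, 0, fun _ _ => rfl, fun h => absurd h hj⟩
    choose cf af haf hrep using hdec
    set M : Matrix (Fin (m + 1)) (Fin (m + 1)) K :=
      fun j k => if (j : ℕ) < m then af j k else (if k = j then 1 else 0) with hMdef
    have hMj : ∀ j k : Fin (m + 1), (j : ℕ) < m → M j k = af j k := by
      intro j k hj; simp only [hMdef, if_pos hj]
    have hMlast : ∀ k : Fin (m + 1), M last k = if k = last then 1 else 0 := by
      intro k
      simp only [hMdef, hlastdef]
      rw [if_neg (by omega)]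
    have hdet : M.det ≠ 0 := by
      intro hdet0
      obtain ⟨v, hv0, hvM⟩ := Matrix.exists_vecMul_eq_zero_iff.mpr hdet0
      have hsum : ∀ k : Fin (m + 1), ∑ j, v j * M j k = 0 := by
        intro k
        have := congrFun hvM k
        simpa [Matrix.vecMul, dotProduct] using this
      have hvlast : v last = 0 := by
        have h := hsum last
        rw [Finset.sum_eq_single last] at h
        · rwa [hMlast, if_pos rfl, mul_one] at h
        · intro j _ hjl
          have hj : (j : ℕ) < m := by
            have := j.isLt
            have : (j : ℕ) ≠ m := fun h' => hjl (Fin.ext h')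
            omega
          rw [hMj j last hj, haf j last (by omega), mul_zero]
        · simp
      set pv : MvPolynomial (Fin (m + 1)) K := ∑ j, C (v j) * X j with hpvdef
      have hterm : ∀ j : Fin (m + 1),
          C (v j) * φ (X j) = C (v j) * (C (cf j) + ∑ k, C (M j k) * X k) := by
        intro j
        by_cases hj : (j : ℕ) < m
        · rw [hrep j hj]
          congr 2
          exact Finset.sum_congr rfl fun k _ => by rw [hMj j k hj]
        · have hjl : j = last := Fin.ext (by have := j.isLt; omega)
          rw [hjl, hvlast, C_0, zero_mul, zero_mul]
      have hφpv : φ pv = C (∑ j, v j * cf j) := by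
        have h1 : φ pv = ∑ j, C (v j) * (C (cf j) + ∑ k, C (M j k) * X k) := by
          rw [hpvdef, map_sum]
          refine Finset.sum_congr rfl fun j _ => ?_
          rw [map_mul, algEquiv_C]
          exact hterm j
        have h2 : ∑ j, C (v j) * (C (cf j) + ∑ k, C (M j k) * X k)
            = C (∑ j, v j * cf j) + ∑ k, C (∑ j, v j * M j k) * X k := by
          simp_rw [mul_add, Finset.mul_sum]
          rw [Finset.sum_add_distrib]
          congr 1
          · rw [map_sum (C : K →+* MvPolynomial (Fin (m + 1)) K)]
            exact Finset.sum_congr rfl fun j _ => C_mul.symm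
          · rw [Finset.sum_comm]
            refine Finset.sum_congr rfl fun k _ => ?_
            rw [map_sum (C : K →+* MvPolynomial (Fin (m + 1)) K), Finset.sum_mul]
            refine Finset.sum_congr rfl fun j _ => ?_
            rw [C_mul, mul_assoc]
        rw [h1, h2]
        have h3 : ∀ k : Fin (m + 1), C (∑ j, v j * M j k) * X k = 0 := by
          intro k; rw [hsum k, C_0, zero_mul]
        rw [Finset.sum_congr rfl fun k _ => h3 k]
        simp
      have hpvC : pv = C (∑ j, v j * cf j) := by
        have := congrArg φ.symm hφpv
        rwa [AlgEquiv.symm_apply_apply, algEquiv_C] at this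
      have hvj : ∀ j0 : Fin (m + 1), v j0 = 0 := by
        intro j0
        have hco : coeff (Finsupp.single j0 1) pv = v j0 := by
          rw [hpvdef]
          rw [MvPolynomial.coeff_sum]
          rw [Finset.sum_eq_single j0]
          · rw [coeff_C_mul, coeff_X', if_pos rfl, mul_one]
          · intro j _ hjj
            rw [coeff_C_mul, coeff_X', if_neg, mul_zero]
            intro heq
            exact hjj (by
              have := Finsupp.single_left_injective (one_ne_zero (α := ℕ)) heq
              exact this)
          · simp
        rw [hpvC, coeff_C, if_neg (fun h => one_ne_zero (Finsupp.single_eq_zero.mp h.symm))] at hco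
        exact hco.symm
      exact hv0 (funext hvj)
    set MGL := Matrix.GeneralLinearGroup.mkOfDetNeZero M hdet with hMGL
    set τ := linAut MGL * transAut cf with hτdef
    have hτX : ∀ j : Fin (m + 1), (j : ℕ) < m → τ (X j) = φ (X j) := by
      intro j hj
      rw [hτdef, AlgEquiv.mul_apply, transAut_X, map_add, linAut_X, algEquiv_C, hrep j hj]
      have : (∑ k, C ((MGL : Matrix (Fin (m + 1)) (Fin (m + 1)) K) j k) * X k)
          = ∑ k, C (af j k) * X k := by
        refine Finset.sum_congr rfl fun k _ => ?_
        have : (MGL : Matrix (Fin (m + 1)) (Fin (m + 1)) K) j k = af j k := by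
          show M j k = af j k
          exact hMj j k hj
        rw [this]
      rw [this]
      exact add_comm _ _
    set ψ := τ⁻¹ * φ with hψdef
    have hψX : ∀ k : Fin (m + 1), k ≠ last → ψ (X k) = X k := by
      intro k hk
      have hkm : (k : ℕ) < m := by
        have := k.isLt
        have : (k : ℕ) ≠ m := fun h' => hk (Fin.ext h')
        omega
      rw [hψdef, AlgEquiv.mul_apply, ← hτX k hkm]
      exact AlgEquiv.symm_apply_apply τ _
    obtain ⟨a, ha, f, hf, heq⟩ := shape ψ last hψX
    have hψmem : ψ ∈ TameGroup K (m + 1) :=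
      mem_tame_of_fix_others ψ last a ha f hf heq hψX
    have hφeq : φ = τ * ψ := by
      rw [hψdef, mul_inv_cancel_left]
    rw [hφeq]
    exact mul_mem (mul_mem (linAut_mem MGL) (transAut_mem cf)) hψmem
  exact ⟨main, inf_eq_left.mpr main⟩


end TameAux

/-- `H_{n-1} ⊆ TA_n(K)`, hence `Ĥ_{n-1} = H_{n-1}`. -/
theorem statement_9 {K : Type*} [Field K] {n : ℕ} (hn : 2 ≤ n) :
    Hsub K n (n - 1) ≤ TameGroup K n ∧
    Hsub K n (n - 1) ⊓ TameGroup K n = Hsub K n (n - 1) :=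
  statement_9_aux hn

end
end

section
/- Let S = [[0,1],[−1,0]] and T = [[1,−1],[1,0]] in SL_2(ℤ). Then S has order 4, T has order 6, S² = T³ (= −I), and the homomorphism from the amalgamated free product (ℤ/4ℤ) *_{ℤ/2ℤ} (ℤ/6ℤ) to SL_2(ℤ) sending the generator of ℤ/4ℤ to S and the generator of ℤ/6ℤ to T (where ℤ/2ℤ embeds as the subgroups generated by S² and by T³ respectively) is an isomorphism: SL_2(ℤ) ≅ (ℤ/4ℤ) *_{ℤ/2ℤ} (ℤ/6ℤ). -/
open MvPolynomial

noncomputable section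


/-- `S = [[0,1],[-1,0]] ∈ SL₂(ℤ)`. -/
def Smat : Matrix.SpecialLinearGroup (Fin 2) ℤ :=
  ⟨!![0, 1; -1, 0], by norm_num [Matrix.det_fin_two_of]⟩

/-- `T = [[1,-1],[1,0]] ∈ SL₂(ℤ)`. -/
def Tmat : Matrix.SpecialLinearGroup (Fin 2) ℤ :=
  ⟨!![1, -1; 1, 0], by norm_num [Matrix.det_fin_two_of]⟩

/-- The amalgamated free product `A *_C B` of two groups along injective homomorphisms
`f : C → A`, `g : C → B`: the pushout of `f` and `g` in the category of groups, realized as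
the quotient of the free product `A * B` by the relations identifying `f(c)` and `g(c)`. -/
abbrev Amal {A B C : Type*} [Group A] [Group B] [Group C] (f : C →* A) (g : C →* B) :=
  Monoid.Coprod A B ⧸ Subgroup.normalClosure
    {w | ∃ c : C, w = Monoid.Coprod.inl (f c) * (Monoid.Coprod.inr (g c))⁻¹}

/-- The embedding `ℤ/2ℤ → ℤ/4ℤ` sending the generator to twice the generator. -/
def z2to4 : Multiplicative (ZMod 2) →* Multiplicative (ZMod 4) :=
  AddMonoidHom.toMultiplicative (ZMod.lift 2 ⟨zmultiplesHom (ZMod 4) (2 : ZMod 4), by decide⟩)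

/-- The embedding `ℤ/2ℤ → ℤ/6ℤ` sending the generator to three times the generator. -/
def z2to6 : Multiplicative (ZMod 2) →* Multiplicative (ZMod 6) :=
  AddMonoidHom.toMultiplicative (ZMod.lift 2 ⟨zmultiplesHom (ZMod 6) (3 : ZMod 6), by decide⟩)

abbrev SL2 := Matrix.SpecialLinearGroup (Fin 2) ℤ

lemma hS4 : Smat ^ 4 = 1 := by ext i j; fin_cases i <;> fin_cases j <;> decide
lemma hT6 : Tmat ^ 6 = 1 := by ext i j; fin_cases i <;> fin_cases j <;> decide
lemma hST : Smat ^ 2 = Tmat ^ 3 := by ext i j; fin_cases i <;> fin_cases j <;> decide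

lemma hordS : orderOf Smat = 4 := by
  rw [orderOf_eq_iff (by norm_num)]
  refine ⟨hS4, ?_⟩
  intro m hm hm'
  interval_cases m <;> exact fun h => absurd (congrArg Subtype.val h) (by decide)

lemma hordT : orderOf Tmat = 6 := by
  rw [orderOf_eq_iff (by norm_num)]
  refine ⟨hT6, ?_⟩
  intro m hm hm'
  interval_cases m <;> exact fun h => absurd (congrArg Subtype.val h) (by decide)

def fS : Multiplicative (ZMod 4) →* SL2 where
  toFun x := Smat ^ (Multiplicative.toAdd x).val
  map_one' := by simp
  map_mul' x y := by
    show Smat ^ (Multiplicative.toAdd x + Multiplicative.toAdd y).val = _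
    rw [ZMod.val_add, ← pow_eq_pow_mod _ hS4, pow_add]

def fT : Multiplicative (ZMod 6) →* SL2 where
  toFun x := Tmat ^ (Multiplicative.toAdd x).val
  map_one' := by simp
  map_mul' x y := by
    show Tmat ^ (Multiplicative.toAdd x + Multiplicative.toAdd y).val = _
    rw [ZMod.val_add, ← pow_eq_pow_mod _ hT6, pow_add]

lemma hrel : ∀ c : Multiplicative (ZMod 2), fS (z2to4 c) = fT (z2to6 c) := by
  intro c
  have h2 : ∀ c : Multiplicative (ZMod 2),
      c = 1 ∨ c = Multiplicative.ofAdd 1 := by decide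
  rcases h2 c with rfl | rfl
  · simp
  · have h4 : z2to4 (Multiplicative.ofAdd 1) = Multiplicative.ofAdd 2 := by decide
    have h6 : z2to6 (Multiplicative.ofAdd 1) = Multiplicative.ofAdd 3 := by decide
    rw [h4, h6]
    show Smat ^ (2 : ZMod 4).val = Tmat ^ (3 : ZMod 6).val
    norm_num [ZMod.val]
    exact hST

open Monoid QuotientGroup

abbrev relSet : Set (Monoid.Coprod (Multiplicative (ZMod 4)) (Multiplicative (ZMod 6))) :=
  {w | ∃ c : Multiplicative (ZMod 2),
    w = Monoid.Coprod.inl (z2to4 c) * (Monoid.Coprod.inr (z2to6 c))⁻¹}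

abbrev N := Subgroup.normalClosure relSet

def liftF := Monoid.Coprod.lift fS fT

lemma hNker : N ≤ liftF.ker := by
  apply Subgroup.normalClosure_le_normal
  rintro w ⟨c, rfl⟩
  simp only [SetLike.mem_coe, MonoidHom.mem_ker, map_mul, map_inv]
  rw [liftF, Monoid.Coprod.lift_apply_inl, Monoid.Coprod.lift_apply_inr, hrel c,
    mul_inv_cancel]

def Phi : (Monoid.Coprod (Multiplicative (ZMod 4)) (Multiplicative (ZMod 6)) ⧸ N) →* SL2 :=
  QuotientGroup.lift N liftF hNker

lemma Phi_mk (w) : Phi (QuotientGroup.mk w) = liftF w := rfl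

lemma Phi_S : Phi (QuotientGroup.mk (Monoid.Coprod.inl (Multiplicative.ofAdd (1 : ZMod 4)))) = Smat := by
  rw [Phi_mk, liftF, Monoid.Coprod.lift_apply_inl]
  show Smat ^ (1 : ZMod 4).val = Smat
  rw [show (1 : ZMod 4).val = 1 by decide, pow_one]

lemma Phi_T : Phi (QuotientGroup.mk (Monoid.Coprod.inr (Multiplicative.ofAdd (1 : ZMod 6)))) = Tmat := by
  rw [Phi_mk, liftF, Monoid.Coprod.lift_apply_inr]
  show Tmat ^ (1 : ZMod 6).val = Tmat
  rw [show (1 : ZMod 6).val = 1 by decide, pow_one]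

-- ### Surjectivity
def Umat : SL2 := ⟨!![1, 1; 0, 1], by norm_num [Matrix.det_fin_two_of]⟩

lemma TS_eq : Tmat * Smat = Umat := by ext i j; fin_cases i <;> fin_cases j <;> decide

lemma Uinv : Umat⁻¹ = ⟨!![1, -1; 0, 1], by norm_num [Matrix.det_fin_two_of]⟩ := by
  apply inv_eq_of_mul_eq_one_right; ext i j; fin_cases i <;> fin_cases j <;> decide

lemma Upow_nat (n : ℕ) : ((Umat ^ n : SL2) : Matrix (Fin 2) (Fin 2) ℤ) = !![1, (n : ℤ); 0, 1] := by
  induction n with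
  | zero => ext i j; fin_cases i <;> fin_cases j <;> decide
  | succ k ih =>
    rw [pow_succ, Matrix.SpecialLinearGroup.coe_mul, ih]
    show _ * (Umat : Matrix (Fin 2) (Fin 2) ℤ) = _
    rw [show (Umat : Matrix (Fin 2) (Fin 2) ℤ) = !![1,1;0,1] from rfl, Matrix.mul_fin_two]
    norm_num
    push_cast
    ring

lemma Uzpow (k : ℤ) : ((Umat ^ k : SL2) : Matrix (Fin 2) (Fin 2) ℤ) = !![1, k; 0, 1] := by
  rcases le_or_gt 0 k with hk | hk
  · lift k to ℕ using hk
    rw [zpow_natCast, Upow_nat]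
  · have h1 : Umat ^ k = (Umat ^ (-k).toNat)⁻¹ := by
      rw [← zpow_natCast, Int.toNat_of_nonneg (by omega), zpow_neg, inv_inv]
    rw [h1]
    have h2 : @HMul.hMul SL2 SL2 SL2 _ (Umat ^ (-k).toNat) ⟨!![1, k; 0, 1], by norm_num [Matrix.det_fin_two_of]⟩ = 1 := by
      ext i j
      erw [Matrix.SpecialLinearGroup.coe_mul, Upow_nat]
      rw [Matrix.mul_fin_two]
      fin_cases i <;> fin_cases j <;> simp <;> omega
    rw [inv_eq_iff_mul_eq_one.mpr h2]

lemma S2coe : ((Smat ^ 2 : SL2) : Matrix (Fin 2) (Fin 2) ℤ) = !![-1, 0; 0, -1] := by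
  ext i j; fin_cases i <;> fin_cases j <;> decide

lemma mem_closure_ST (g : SL2) : g ∈ Subgroup.closure {Smat, Tmat} := by
  set H := Subgroup.closure {Smat, Tmat} with hH
  have hS : Smat ∈ H := Subgroup.subset_closure (by simp)
  have hT : Tmat ∈ H := Subgroup.subset_closure (by simp)
  have hU : Umat ∈ H := TS_eq ▸ mul_mem hT hS
  suffices Hn : ∀ n : ℕ, ∀ g : SL2, ((g : Matrix (Fin 2) (Fin 2) ℤ) 1 0).natAbs < n → g ∈ H from
    Hn _ g (Nat.lt_succ_self _)
  intro n
  induction n with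
  | zero => intro g hg; omega
  | succ n ih =>
    intro g hg
    by_cases hc : (g : Matrix (Fin 2) (Fin 2) ℤ) 1 0 = 0
    · -- triangular case
      have hdet := g.2
      rw [Matrix.det_fin_two] at hdet
      rw [hc, mul_zero, sub_zero] at hdet
      rcases Int.mul_eq_one_iff_eq_one_or_neg_one.mp hdet with ⟨h1, h2⟩ | ⟨h1, h2⟩
      · have hgU : g = Umat ^ ((g : Matrix (Fin 2) (Fin 2) ℤ) 0 1) := by
          ext i j
          rw [Uzpow]
          fin_cases i <;> fin_cases j <;> simp [h1, h2, hc]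
        exact hgU ▸ zpow_mem hU _
      · have hgU : g = Smat ^ 2 * Umat ^ (-(g : Matrix (Fin 2) (Fin 2) ℤ) 0 1) := by
          ext i j
          rw [Matrix.SpecialLinearGroup.coe_mul, S2coe, Uzpow, Matrix.mul_fin_two]
          fin_cases i <;> fin_cases j <;> simp [h1, h2, hc]
        exact hgU ▸ mul_mem (pow_mem hS 2) (zpow_mem hU _)
    · set a := (g : Matrix (Fin 2) (Fin 2) ℤ) 0 0 with ha
      set c := (g : Matrix (Fin 2) (Fin 2) ℤ) 1 0 with hcdef
      set q := a / c with hq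
      have key : g = Umat ^ q * (Smat⁻¹ * (Smat * (Umat ^ (-q) * g))) := by group
      have hent : ((Smat * (Umat ^ (-q) * g) : SL2) : Matrix (Fin 2) (Fin 2) ℤ) 1 0
          = -(a % c) := by
        rw [Matrix.SpecialLinearGroup.coe_mul, Matrix.SpecialLinearGroup.coe_mul, Uzpow]
        rw [Int.emod_def]
        simp [Matrix.mul_apply, Fin.sum_univ_two, Matrix.vecMul, dotProduct,
          Smat, ← ha, ← hcdef]
        ring
      have hmod1 : 0 ≤ a % c := Int.emod_nonneg a hc
      have hmod2 : a % c < |c| := by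
        rcases lt_trichotomy c 0 with h | h | h
        · rw [abs_of_neg h, ← Int.emod_neg]
          exact Int.emod_lt_of_pos a (by omega)
        · exact absurd h hc
        · rw [abs_of_pos h]; exact Int.emod_lt_of_pos a h
      have hg' : (((Smat * (Umat ^ (-q) * g) : SL2) : Matrix (Fin 2) (Fin 2) ℤ) 1 0).natAbs < n := by
        rw [hent]
        have := Int.abs_eq_natAbs c
        omega
      exact key ▸ mul_mem (zpow_mem hU q) (mul_mem (inv_mem hS) (ih _ hg'))

-- ### Amalgam side
abbrev AmalG := Monoid.Coprod (Multiplicative (ZMod 4)) (Multiplicative (ZMod 6)) ⧸ N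

def sA : AmalG := QuotientGroup.mk (Monoid.Coprod.inl (Multiplicative.ofAdd (1 : ZMod 4)))
def tA : AmalG := QuotientGroup.mk (Monoid.Coprod.inr (Multiplicative.ofAdd (1 : ZMod 6)))

lemma mk_inl_pow (v : ℕ) :
    sA ^ v = QuotientGroup.mk (Monoid.Coprod.inl ((Multiplicative.ofAdd (1 : ZMod 4)) ^ v)) := by
  rw [sA, ← QuotientGroup.mk_pow, ← map_pow]

lemma mk_inr_pow (v : ℕ) :
    tA ^ v = QuotientGroup.mk (Monoid.Coprod.inr ((Multiplicative.ofAdd (1 : ZMod 6)) ^ v)) := by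
  rw [tA, ← QuotientGroup.mk_pow, ← map_pow]

lemma hs4 : sA ^ 4 = 1 := by
  rw [mk_inl_pow, show (Multiplicative.ofAdd (1 : ZMod 4)) ^ 4 = 1 by decide, map_one,
    QuotientGroup.mk_one]

lemma ht6 : tA ^ 6 = 1 := by
  rw [mk_inr_pow, show (Multiplicative.ofAdd (1 : ZMod 6)) ^ 6 = 1 by decide, map_one,
    QuotientGroup.mk_one]

lemma hst : sA ^ 2 = tA ^ 3 := by
  rw [mk_inl_pow, mk_inr_pow,
    show (Multiplicative.ofAdd (1 : ZMod 4)) ^ 2 = Multiplicative.ofAdd (2 : ZMod 4) by decide,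
    show (Multiplicative.ofAdd (1 : ZMod 6)) ^ 3 = Multiplicative.ofAdd (3 : ZMod 6) by decide]
  rw [QuotientGroup.eq]
  have h4 : z2to4 (Multiplicative.ofAdd 1) = Multiplicative.ofAdd 2 := by decide
  have h6 : z2to6 (Multiplicative.ofAdd 1) = Multiplicative.ofAdd 3 := by decide
  have hw : Monoid.Coprod.inl (Multiplicative.ofAdd (2 : ZMod 4)) *
      (Monoid.Coprod.inr (Multiplicative.ofAdd (3 : ZMod 6)))⁻¹ ∈ N :=
    Subgroup.subset_normalClosure ⟨Multiplicative.ofAdd (1 : ZMod 2), by rw [h4, h6]⟩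
  have hc := Subgroup.normalClosure_normal.conj_mem _ (inv_mem hw)
    (Monoid.Coprod.inl (Multiplicative.ofAdd (2 : ZMod 4)))⁻¹
  convert hc using 1
  group

lemma genA (g : AmalG) : g ∈ Subgroup.closure {sA, tA} := by
  induction g using QuotientGroup.induction_on with
  | H w =>
    induction w using Monoid.Coprod.induction_on with
    | inl m =>
      have : QuotientGroup.mk (Monoid.Coprod.inl m : Monoid.Coprod _ _)
          = sA ^ (Multiplicative.toAdd m).val := by
        rw [mk_inl_pow,
          show (Multiplicative.ofAdd (1 : ZMod 4)) ^ (Multiplicative.toAdd m).val = m by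
            revert m; decide]
      rw [this]
      exact pow_mem (Subgroup.subset_closure (by simp)) _
    | inr m =>
      have : QuotientGroup.mk (Monoid.Coprod.inr m : Monoid.Coprod _ _)
          = tA ^ (Multiplicative.toAdd m).val := by
        rw [mk_inr_pow,
          show (Multiplicative.ofAdd (1 : ZMod 6)) ^ (Multiplicative.toAdd m).val = m by
            revert m; decide]
      rw [this]
      exact pow_mem (Subgroup.subset_closure (by simp)) _
    | mul x y hx hy =>
      rw [QuotientGroup.mk_mul]
      exact mul_mem hx hy

-- ### Letters and words
inductive Ltr | sl | tl | tl2
  deriving DecidableEq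

def Ltr.isS : Ltr → Bool
  | .sl => true
  | _ => false

def ltrElt : Ltr → AmalG
  | .sl => sA
  | .tl => tA
  | .tl2 => tA ^ 2

def ltrMat : Ltr → SL2
  | .sl => Smat
  | .tl => Tmat
  | .tl2 => Tmat ^ 2

def wordElt (l : List Ltr) : AmalG := (l.map ltrElt).prod
def wordMat (l : List Ltr) : SL2 := (l.map ltrMat).prod

def Alt (l : List Ltr) : Prop := l.Chain' (fun a b => a.isS ≠ b.isS)

def zA : AmalG := sA ^ 2

lemma zA_comm (g : AmalG) : Commute zA g := by
  have h1 : Commute zA sA := (Commute.refl sA).pow_left 2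
  have h2 : Commute zA tA := by
    rw [zA, hst]; exact (Commute.refl tA).pow_left 3
  have := genA g
  induction this using Subgroup.closure_induction with
  | mem x hx => rcases hx with rfl | rfl; exacts [h1, h2]
  | one => exact Commute.one_right _
  | mul x y _ _ cx cy => exact cx.mul_right cy
  | inv x _ cx => exact cx.inv_right

def G0 : Set AmalG := {g | ∃ (δ : ℕ) (l : List Ltr), Alt l ∧ g = zA ^ δ * wordElt l}

lemma one_mem_G0 : (1 : AmalG) ∈ G0 := ⟨0, [], List.isChain_nil, by simp [wordElt]⟩

lemma zmul_G0 {g : AmalG} (hg : g ∈ G0) : zA * g ∈ G0 := by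
  obtain ⟨δ, l, hl, rfl⟩ := hg
  exact ⟨δ + 1, l, hl, by rw [pow_succ', mul_assoc]⟩

lemma sA_mul_word (l : List Ltr) (hl : Alt l) :
    ∃ (δ : ℕ) (l' : List Ltr), Alt l' ∧ sA * wordElt l = zA ^ δ * wordElt l' := by
  match l with
  | [] => exact ⟨0, [.sl], List.isChain_singleton _, by simp [wordElt, ltrElt]⟩
  | .sl :: l' =>
    refine ⟨1, l', hl.tail, ?_⟩
    rw [wordElt, List.map_cons, List.prod_cons, ← mul_assoc]
    rfl
  | .tl :: l' =>
    refine ⟨0, .sl :: .tl :: l', ?_, by simp [wordElt, ltrElt, List.prod_cons, mul_assoc]⟩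
    exact hl.cons (by simp [Ltr.isS])
  | .tl2 :: l' =>
    refine ⟨0, .sl :: .tl2 :: l', ?_, by simp [wordElt, ltrElt, List.prod_cons, mul_assoc]⟩
    exact hl.cons (by simp [Ltr.isS])

lemma tA_mul_word (l : List Ltr) (hl : Alt l) :
    ∃ (δ : ℕ) (l' : List Ltr), Alt l' ∧ tA * wordElt l = zA ^ δ * wordElt l' := by
  match l with
  | [] => exact ⟨0, [.tl], List.isChain_singleton _, by simp [wordElt, ltrElt]⟩
  | .sl :: l' =>
    refine ⟨0, .tl :: .sl :: l', hl.cons (by simp [Ltr.isS]), ?_⟩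
    simp [wordElt, ltrElt, List.prod_cons, mul_assoc]
  | .tl :: l' =>
    refine ⟨0, .tl2 :: l', ?_, ?_⟩
    · rcases l' with _ | ⟨b, l''⟩
      · exact List.isChain_singleton _
      · refine List.IsChain.cons_cons ?_ (hl.tail)
        have := List.isChain_cons_cons.mp hl
        simpa [Ltr.isS] using this.1
    · simp only [wordElt, List.map_cons, List.prod_cons, ← mul_assoc, pow_zero, one_mul]
      simp [ltrElt, pow_two]
  | .tl2 :: l' =>
    refine ⟨1, l', hl.tail, ?_⟩
    rw [wordElt, List.map_cons, List.prod_cons, ← mul_assoc]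
    have : tA * ltrElt .tl2 = zA ^ 1 := by
      rw [ltrElt, pow_one, zA, hst]
      group
    rw [this]
    rfl

lemma smul_G0 {g : AmalG} (hg : g ∈ G0) : sA * g ∈ G0 := by
  obtain ⟨δ, l, hl, rfl⟩ := hg
  obtain ⟨δ', l', hl', he⟩ := sA_mul_word l hl
  refine ⟨δ + δ', l', hl', ?_⟩
  rw [← mul_assoc, ← ((zA_comm sA).pow_left δ).eq, mul_assoc, he, ← mul_assoc, ← pow_add]

lemma tmul_G0 {g : AmalG} (hg : g ∈ G0) : tA * g ∈ G0 := by
  obtain ⟨δ, l, hl, rfl⟩ := hg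
  obtain ⟨δ', l', hl', he⟩ := tA_mul_word l hl
  refine ⟨δ + δ', l', hl', ?_⟩
  rw [← mul_assoc, ← ((zA_comm tA).pow_left δ).eq, mul_assoc, he, ← mul_assoc, ← pow_add]

lemma sinv_mul_G0 {g : AmalG} (hg : g ∈ G0) : sA⁻¹ * g ∈ G0 := by
  have h : sA⁻¹ = zA * sA := by
    have h1 : sA * (zA * sA) = sA ^ 4 := by rw [zA]; group
    exact inv_eq_of_mul_eq_one_right (h1.trans hs4)
  rw [h, mul_assoc]
  exact zmul_G0 (smul_G0 hg)

lemma tinv_mul_G0 {g : AmalG} (hg : g ∈ G0) : tA⁻¹ * g ∈ G0 := by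
  have h : tA⁻¹ = zA * (tA * tA) := by
    have h1 : tA * (zA * (tA * tA)) = tA ^ 6 := by rw [zA, hst]; group
    exact inv_eq_of_mul_eq_one_right (h1.trans ht6)
  rw [h, mul_assoc, mul_assoc]
  exact zmul_G0 (tmul_G0 (tmul_G0 hg))

lemma total_G0 (g : AmalG) : g ∈ G0 := by
  have key : ∀ g ∈ Subgroup.closure {sA, tA}, ∀ h ∈ G0, g * h ∈ G0 ∧ g⁻¹ * h ∈ G0 := by
    intro g hg
    induction hg using Subgroup.closure_induction with
    | mem x hx =>
      rcases hx with rfl | rfl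
      · exact fun h hh => ⟨smul_G0 hh, sinv_mul_G0 hh⟩
      · exact fun h hh => ⟨tmul_G0 hh, tinv_mul_G0 hh⟩
    | one => intro h hh; constructor <;> simpa
    | mul x y _ _ cx cy =>
      intro h hh
      constructor
      · rw [mul_assoc]; exact (cx _ ((cy _ hh).1)).1
      · rw [mul_inv_rev, mul_assoc]; exact (cy _ ((cx _ hh).2)).2
    | inv x _ cx =>
      intro h hh
      exact ⟨(cx _ hh).2, by rw [inv_inv]; exact (cx _ hh).1⟩
  have := (key g (genA g) 1 one_mem_G0).1
  simpa using this

-- ### Ping-pong in SL2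
def actM (M : SL2) (v : ℤ × ℤ) : ℤ × ℤ :=
  ((M : Matrix (Fin 2) (Fin 2) ℤ) 0 0 * v.1 + (M : Matrix (Fin 2) (Fin 2) ℤ) 0 1 * v.2,
   (M : Matrix (Fin 2) (Fin 2) ℤ) 1 0 * v.1 + (M : Matrix (Fin 2) (Fin 2) ℤ) 1 1 * v.2)

lemma actM_mul (M N' : SL2) (v : ℤ × ℤ) : actM (M * N') v = actM M (actM N' v) := by
  simp only [actM, Matrix.SpecialLinearGroup.coe_mul, Matrix.mul_apply, Fin.sum_univ_two,
    Prod.mk.injEq]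
  constructor <;> ring

lemma actM_one (v : ℤ × ℤ) : actM 1 v = v := by
  simp [actM, Matrix.SpecialLinearGroup.coe_one, Matrix.one_apply]

lemma actM_S (v : ℤ × ℤ) : actM Smat v = (v.2, -v.1) := by
  simp only [actM, Smat]
  norm_num [Matrix.cons_val_zero, Matrix.cons_val_one]

lemma actM_T (v : ℤ × ℤ) : actM Tmat v = (v.1 - v.2, v.1) := by
  simp only [actM, Tmat]
  norm_num [Matrix.cons_val_zero, Matrix.cons_val_one]
  ring

lemma actM_T2 (v : ℤ × ℤ) : actM (Tmat ^ 2) v = (-v.2, v.1 - v.2) := by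
  rw [pow_two, actM_mul, actM_T, actM_T]
  simp only [Prod.mk.injEq]
  exact ⟨by ring, trivial⟩

lemma actM_S2 (v : ℤ × ℤ) : actM (Smat ^ 2) v = (-v.1, -v.2) := by
  rw [pow_two, actM_mul, actM_S, actM_S]

def v0 : Ltr → ℤ × ℤ
  | .sl => (1, 1)
  | _ => (-1, 1)

def InvT (v : ℤ × ℤ) : Prop := 0 < v.1 * v.2 ∧ v.1 ≠ v.2
def InvS (w v : ℤ × ℤ) : Prop := v.1 * v.2 < 0 ∧ v ≠ w ∧ v ≠ (-w.1, -w.2)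

lemma step_T {v : ℤ × ℤ} (h : v.1 * v.2 < 0) : InvT (actM Tmat v) := by
  rw [actM_T]
  refine ⟨show 0 < (v.1 - v.2) * v.1 by nlinarith [sq_nonneg v.1], ?_⟩
  show v.1 - v.2 ≠ v.1
  intro he
  have h2 : v.2 = 0 := by linarith
  rw [h2, mul_zero] at h
  exact absurd h (by norm_num)

lemma step_T2 {v : ℤ × ℤ} (h : v.1 * v.2 < 0) : InvT (actM (Tmat ^ 2) v) := by
  rw [actM_T2]
  refine ⟨show 0 < -v.2 * (v.1 - v.2) by nlinarith [sq_nonneg v.2], ?_⟩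
  show -v.2 ≠ v.1 - v.2
  intro he
  have h2 : v.1 = 0 := by linarith
  rw [h2, zero_mul] at h
  exact absurd h (by norm_num)

lemma step_S {v : ℤ × ℤ} (h : InvT v) (w : Ltr) : InvS (v0 w) (actM Smat v) := by
  obtain ⟨h1, h2⟩ := h
  have hs := mul_pos_iff.mp h1
  rw [actM_S]
  refine ⟨show v.2 * -v.1 < 0 by nlinarith, ?_, ?_⟩ <;> cases w <;> simp [v0, Prod.ext_iff] <;> omega

def headInv : Ltr → (ℤ × ℤ) → (ℤ × ℤ) → Prop
  | .sl, w, v => InvS w v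
  | _, _, v => InvT v

lemma pingpong : ∀ (l : List Ltr) (a : Ltr), Alt (a :: l) →
    headInv a (v0 (l.getLastD a)) (actM (wordMat (a :: l)) (v0 (l.getLastD a))) := by
  intro l
  induction l with
  | nil =>
    intro a _
    cases a <;>
      simp only [List.getLastD_nil, wordMat, List.map_cons, List.map_nil, List.prod_cons,
        List.prod_nil, mul_one, headInv, ltrMat, v0] <;>
      [rw [actM_S]; rw [actM_T]; rw [actM_T2]] <;>
      norm_num [InvS, InvT, Prod.ext_iff]
  | cons b l'' ih =>
    intro a hAlt
    have hab : a.isS ≠ b.isS := (List.isChain_cons_cons.mp hAlt).1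
    have hAlt' : Alt (b :: l'') := (List.isChain_cons_cons.mp hAlt).2
    have hIH := ih b hAlt'
    have hw : wordMat (a :: b :: l'') = ltrMat a * wordMat (b :: l'') := by
      simp [wordMat, List.prod_cons]
    rw [List.getLastD_cons, hw, actM_mul]
    cases a <;> cases b <;> simp [Ltr.isS] at hab
    · -- a = sl, b = tl
      exact step_S hIH _
    · exact step_S hIH _
    · -- a = tl, b = sl
      exact step_T hIH.1
    · exact step_T2 hIH.1


lemma wordMat_ne (l : List Ltr) (hl : Alt l) (hne : l ≠ []) :
    wordMat l ≠ 1 ∧ wordMat l ≠ Smat ^ 2 := by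
  obtain ⟨a, l', rfl⟩ := List.exists_cons_of_ne_nil hne
  have hp := pingpong l' a hl
  generalize hgl : l'.getLastD a = c at hp
  constructor
  · intro h
    rw [h, actM_one] at hp
    cases a <;> cases c <;>
      norm_num [headInv, InvS, InvT, v0, Prod.ext_iff] at hp
  · intro h
    rw [h, actM_S2] at hp
    cases a <;> cases c <;>
      norm_num [headInv, InvS, InvT, v0, Prod.ext_iff] at hp

lemma Phi_sA : Phi sA = Smat := Phi_S
lemma Phi_tA : Phi tA = Tmat := Phi_T
lemma Phi_z : Phi zA = Smat ^ 2 := by rw [zA, map_pow, Phi_sA]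

lemma Phi_word (l : List Ltr) : Phi (wordElt l) = wordMat l := by
  induction l with
  | nil => simp [wordElt, wordMat]
  | cons a l ih =>
    rw [wordElt, wordMat, List.map_cons, List.map_cons, List.prod_cons, List.prod_cons,
      map_mul]
    rw [show (List.map ltrElt l).prod = wordElt l from rfl, ih]
    congr 1
    cases a
    · exact Phi_sA
    · exact Phi_tA
    · rw [ltrElt, ltrMat, map_pow, Phi_tA]

lemma zA2 : zA ^ 2 = 1 := by rw [zA, ← pow_mul]; exact hs4
lemma S22 : (Smat ^ 2) ^ 2 = 1 := by rw [← pow_mul]; exact hS4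
lemma S2ne1 : Smat ^ 2 ≠ 1 := fun h => absurd (congrArg Subtype.val h) (by decide)

lemma Phi_inj : Function.Injective Phi := by
  rw [injective_iff_map_eq_one]
  intro g hg
  obtain ⟨δ, l, hl, rfl⟩ := total_G0 g
  rw [map_mul, map_pow, Phi_z, Phi_word] at hg
  rcases Nat.even_or_odd δ with ⟨k, hk⟩ | ⟨k, hk⟩
  · have hz : (Smat ^ 2) ^ δ = 1 := by
      rw [hk, ← two_mul, pow_mul, S22, one_pow]
    rw [hz, one_mul] at hg
    rcases eq_or_ne l [] with rfl | hne
    · have hzA : zA ^ δ = 1 := by rw [hk, ← two_mul, pow_mul, zA2, one_pow]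
      simp [hzA, wordElt]
    · exact absurd hg (wordMat_ne l hl hne).1
  · have hz : (Smat ^ 2) ^ δ = Smat ^ 2 := by
      rw [hk, pow_add, pow_mul, S22, one_pow, pow_one, one_mul]
    rw [hz] at hg
    rcases eq_or_ne l [] with rfl | hne
    · rw [show wordMat [] = 1 from rfl, mul_one] at hg
      exact absurd hg S2ne1
    · have hw2 : wordMat l = Smat ^ 2 :=
        (inv_eq_of_mul_eq_one_right hg).symm.trans
          (inv_eq_of_mul_eq_one_right (by rw [← pow_two]; exact S22))
      exact absurd hw2 (wordMat_ne l hl hne).2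

lemma Phi_surj : Function.Surjective Phi := by
  intro M
  have hle : Subgroup.closure {Smat, Tmat} ≤ Phi.range := by
    rw [Subgroup.closure_le]
    rintro x (rfl | rfl)
    exacts [⟨sA, Phi_sA⟩, ⟨tA, Phi_tA⟩]
  exact hle (mem_closure_ST M)

/-- `SL₂(ℤ) ≅ ℤ/4ℤ *_{ℤ/2ℤ} ℤ/6ℤ`, with the generator of `ℤ/4ℤ` mapping to
`S` and the generator of `ℤ/6ℤ` mapping to `T`. -/
theorem statement_17 :
    orderOf Smat = 4 ∧ orderOf Tmat = 6 ∧ Smat ^ 2 = Tmat ^ 3 ∧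
    ∃ Φ : Amal z2to4 z2to6 →* Matrix.SpecialLinearGroup (Fin 2) ℤ,
      Φ (QuotientGroup.mk (Monoid.Coprod.inl (Multiplicative.ofAdd (1 : ZMod 4)))) = Smat ∧
      Φ (QuotientGroup.mk (Monoid.Coprod.inr (Multiplicative.ofAdd (1 : ZMod 6)))) = Tmat ∧
      Function.Bijective Φ :=
  ⟨hordS, hordT, hST, Phi, Phi_S, Phi_T, Phi_inj, Phi_surj⟩

end
end

section
/- The group presented by three generators b₁, b₂, b₃ subject to the three relations b₂b₃b₂⁻¹ = b₃², b₃b₁b₃⁻¹ = b₁², b₁b₂b₁⁻¹ = b₂² is the trivial group. Consequently, the amalgamated product of the three nontrivial groups A₁ = ⟨b₂,b₃ | b₂b₃b₂⁻¹ = b₃²⟩, A₂ = ⟨b₃,b₁ | b₃b₁b₃⁻¹ = b₁²⟩, A₃ = ⟨b₁,b₂ | b₁b₂b₁⁻¹ = b₂²⟩ along the infinite cyclic subgroups B_{ij} = ⟨b_k⟩ ({i,j,k} = {1,2,3}) is trivial. -/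
open MvPolynomial

noncomputable section


/-- The relations `b₂b₃b₂⁻¹ = b₃²`, `b₃b₁b₃⁻¹ = b₁²`, `b₁b₂b₁⁻¹ = b₂²`
(with `b₁ = of 0`, `b₂ = of 1`, `b₃ = of 2`). -/
def TripleRels : Set (FreeGroup (Fin 3)) :=
  {FreeGroup.of 1 * FreeGroup.of 2 * (FreeGroup.of 1)⁻¹ * (FreeGroup.of 2 * FreeGroup.of 2)⁻¹,
   FreeGroup.of 2 * FreeGroup.of 0 * (FreeGroup.of 2)⁻¹ * (FreeGroup.of 0 * FreeGroup.of 0)⁻¹,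
   FreeGroup.of 0 * FreeGroup.of 1 * (FreeGroup.of 0)⁻¹ * (FreeGroup.of 1 * FreeGroup.of 1)⁻¹}

/-- The defining relation of `Aᵢ`: `b_{i+1} b_{i+2} b_{i+1}⁻¹ = b_{i+2}²` (indices mod 3),
on the generators `{b_j : j ≠ i}`. -/
def PairRel (i : Fin 3) : Set (FreeGroup {j : Fin 3 // j ≠ i}) :=
  {FreeGroup.of ⟨i + 1, (by decide : ∀ j : Fin 3, j + 1 ≠ j) i⟩ *
     FreeGroup.of ⟨i + 2, (by decide : ∀ j : Fin 3, j + 2 ≠ j) i⟩ *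
     (FreeGroup.of ⟨i + 1, (by decide : ∀ j : Fin 3, j + 1 ≠ j) i⟩)⁻¹ *
     (FreeGroup.of ⟨i + 2, (by decide : ∀ j : Fin 3, j + 2 ≠ j) i⟩ *
        FreeGroup.of ⟨i + 2, (by decide : ∀ j : Fin 3, j + 2 ≠ j) i⟩)⁻¹}

/-- The groups `A₁, A₂, A₃` (0-indexed: `Agrp i` omits the generator `b_i`). -/
abbrev Agrp (i : Fin 3) := PresentedGroup (PairRel i)

/-- The relations of the amalgamated product: for each pair `i ≠ j` with third index `k`,
identify the two images of each element `b_k^m` of the infinite cyclic group `B_{ij} = ⟨b_k⟩`. -/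
abbrev TripleAmalRel : Subgroup (Monoid.CoprodI fun i => Agrp i) :=
  Subgroup.normalClosure
    {w | ∃ (i j k : Fin 3) (_ : i ≠ j) (hki : k ≠ i) (hkj : k ≠ j) (m : ℤ),
      w = Monoid.CoprodI.of (M := fun t => Agrp t) (i := i) ((PresentedGroup.of ⟨k, hki⟩) ^ m) *
        (Monoid.CoprodI.of (M := fun t => Agrp t) (i := j) ((PresentedGroup.of ⟨k, hkj⟩) ^ m))⁻¹}

section Key
variable {G : Type*} [Group G]

lemma conj_double {a b : G} (h : a * b * a⁻¹ = b * b) :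
    ∀ n : ℤ, a * b ^ n * a⁻¹ = b ^ (2 * n) := by
  intro n
  calc a * b ^ n * a⁻¹ = (a * b * a⁻¹) ^ n := conj_zpow.symm
    _ = (b ^ (2 : ℤ)) ^ n := by rw [h, zpow_two]
    _ = b ^ (2 * n) := by rw [← zpow_mul]

lemma conj_double_pow {a b : G} (h : a * b * a⁻¹ = b * b) :
    ∀ (k : ℕ) (n : ℤ), a ^ (k : ℤ) * b ^ n * a ^ (-(k : ℤ)) = b ^ (2 ^ k * n) := by
  intro k
  induction k with
  | zero => intro n; simp
  | succ k ih =>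
    intro n
    have hk : a ^ ((k + 1 : ℕ) : ℤ) = a ^ (k : ℤ) * a := by
      push_cast
      rw [zpow_add_one]
    have hk' : a ^ (-((k + 1 : ℕ) : ℤ)) = a⁻¹ * a ^ (-(k : ℤ)) := by
      push_cast
      rw [neg_add, zpow_add, zpow_neg_one, ← zpow_neg_one, ← zpow_add, ← zpow_add]
      ring_nf
    rw [hk, hk']
    calc a ^ (k:ℤ) * a * b ^ n * (a⁻¹ * a ^ (-(k:ℤ)))
        = a ^ (k:ℤ) * (a * b ^ n * a⁻¹) * a ^ (-(k:ℤ)) := by group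
      _ = a ^ (k:ℤ) * b ^ (2 * n) * a ^ (-(k:ℤ)) := by rw [conj_double h]
      _ = b ^ (2 ^ k * (2 * n)) := ih (2 * n)
      _ = b ^ (2 ^ (k+1) * n) := by ring_nf

lemma ba_pow {a b : G} (h : a * b * a⁻¹ = b * b) :
    ∀ n : ℕ, (b * a) ^ n = b ^ ((2:ℤ) ^ n - 1) * a ^ (n : ℤ) := by
  intro n
  induction n with
  | zero => simp
  | succ n ih =>
    have hb : a ^ (n:ℤ) * b = b ^ ((2:ℤ) ^ n) * a ^ (n:ℤ) := by
      have := conj_double_pow h n 1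
      rw [zpow_one] at this
      calc a ^ (n:ℤ) * b = (a ^ (n:ℤ) * b * a ^ (-(n:ℤ))) * a ^ (n:ℤ) := by group
        _ = b ^ ((2:ℤ) ^ n * 1) * a ^ (n:ℤ) := by rw [this]
        _ = b ^ ((2:ℤ) ^ n) * a ^ (n:ℤ) := by rw [mul_one]
    calc (b * a) ^ (n + 1) = (b * a) ^ n * (b * a) := pow_succ _ _
      _ = b ^ ((2:ℤ) ^ n - 1) * (a ^ (n:ℤ) * b) * a ^ ((1:ℕ):ℤ) := by
          rw [ih]; group
      _ = b ^ ((2:ℤ) ^ n - 1) * (b ^ ((2:ℤ) ^ n) * a ^ (n:ℤ)) * a ^ ((1:ℕ):ℤ) := by rw [hb]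
      _ = b ^ ((2:ℤ) ^ n - 1 + (2:ℤ) ^ n) * a ^ ((n:ℤ) + 1) := by
          rw [zpow_add b, zpow_add a]; push_cast; group
      _ = b ^ ((2:ℤ) ^ (n+1) - 1) * a ^ ((n+1 : ℕ):ℤ) := by
          push_cast; ring_nf

end Key

lemma key_lemma {G : Type*} [Group G] (a b c : G)
    (h1 : a * b * a⁻¹ = b * b) (h2 : b * c * b⁻¹ = c * c) (h3 : c * a * c⁻¹ = a * a) :
    a = 1 ∧ b = 1 ∧ c = 1 := by
  have L1 : ∀ n : ℤ, a * b ^ n * a⁻¹ = b ^ (2 * n) := conj_double h1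
  have L3 : ∀ n : ℤ, c * a ^ n * c⁻¹ = a ^ (2 * n) := conj_double h3
  have L2 : ∀ (k : ℕ) (n : ℤ), a ^ (k : ℤ) * b ^ n * a ^ (-(k : ℤ)) = b ^ (2 ^ k * n) :=
    conj_double_pow h1
  have G1 : ∀ n : ℕ, (b * a) ^ n = b ^ ((2:ℤ) ^ n - 1) * a ^ (n : ℤ) := ba_pow h1
  -- consequences of h2
  have K1 : b⁻¹ * (c * c) = c * b⁻¹ := by rw [← h2]; group
  have K2 : c * c * b = b * c := by rw [← h2]; group
  -- T0 : b⁻¹ a b = b a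
  have T0 : b⁻¹ * a * b = b * a := by
    calc b⁻¹ * a * b = b⁻¹ * (a * b * a⁻¹) * a := by group
      _ = b⁻¹ * (b * b) * a := by rw [h1]
      _ = b * a := by group
  -- T2 : c (ba) c⁻¹ = (ba)^4
  have T2 : c * (b * a) * c⁻¹ = (b * a) ^ (4:ℕ) := by
    calc c * (b * a) * c⁻¹ = c * (b⁻¹ * a * b) * c⁻¹ := by rw [T0]
      _ = (c * b⁻¹) * a * (c * b⁻¹)⁻¹ := by group
      _ = (b⁻¹ * (c * c)) * a * (b⁻¹ * (c * c))⁻¹ := by rw [K1]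
      _ = b⁻¹ * (c * (c * a * c⁻¹) * c⁻¹) * b := by group
      _ = b⁻¹ * (c * (a * a) * c⁻¹) * b := by rw [h3]
      _ = b⁻¹ * (c * a ^ (2:ℤ) * c⁻¹) * b := by rw [zpow_two]
      _ = b⁻¹ * a ^ (4:ℤ) * b := by rw [L3 2]; norm_num
      _ = (b⁻¹ * a * (b⁻¹)⁻¹) ^ (4:ℤ) := by rw [conj_zpow, inv_inv]
      _ = (b * a) ^ (4:ℤ) := by rw [inv_inv, T0]
      _ = (b * a) ^ (4:ℕ) := by norm_cast
  -- T1 : c b c⁻¹ = (ba)^4 a⁻²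
  have T1 : c * b * c⁻¹ = (b * a) ^ (4:ℕ) * a ^ (-2:ℤ) := by
    calc c * b * c⁻¹ = (c * (b * a) * c⁻¹) * (c * a ^ (-1:ℤ) * c⁻¹) := by
          rw [zpow_neg_one]; group
      _ = (b * a) ^ (4:ℕ) * (c * a ^ (-1:ℤ) * c⁻¹) := by rw [T2]
      _ = (b * a) ^ (4:ℕ) * a ^ (-2:ℤ) := by rw [L3 (-1)]; norm_num
  -- s = b⁻¹ (c b c⁻¹) commutes with c
  have hsc : c * (b⁻¹ * (c * b * c⁻¹)) * c⁻¹ = b⁻¹ * (c * b * c⁻¹) := by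
    calc c * (b⁻¹ * (c * b * c⁻¹)) * c⁻¹
        = (c * b⁻¹) * (c * b) * c⁻¹ * c⁻¹ := by group
      _ = (b⁻¹ * (c * c)) * (c * b) * c⁻¹ * c⁻¹ := by rw [← K1]
      _ = b⁻¹ * (c * (c * c * b)) * c⁻¹ * c⁻¹ := by simp [mul_assoc]
      _ = b⁻¹ * (c * (b * c)) * c⁻¹ * c⁻¹ := by rw [K2]
      _ = b⁻¹ * (c * b * c⁻¹) := by group
  -- c (cbc⁻¹) c⁻¹ = (ba)^16 a⁻⁴
  have e1 : c * (c * b * c⁻¹) * c⁻¹ = (b * a) ^ (16:ℕ) * a ^ (-4:ℤ) := by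
    calc c * (c * b * c⁻¹) * c⁻¹
        = c * ((b * a) ^ (4:ℕ) * a ^ (-2:ℤ)) * c⁻¹ := by rw [T1]
      _ = (c * (b * a) * c⁻¹) ^ (4:ℕ) * (c * a ^ (-2:ℤ) * c⁻¹) := by
          rw [conj_pow]; group
      _ = ((b * a) ^ (4:ℕ)) ^ (4:ℕ) * a ^ (-4:ℤ) := by rw [T2, L3 (-2)]; norm_num
      _ = (b * a) ^ (16:ℕ) * a ^ (-4:ℤ) := by rw [← pow_mul]
  -- EB : the first mixed relation
  have EB : (c * b * c⁻¹)⁻¹ * ((b * a) ^ (16:ℕ) * a ^ (-4:ℤ)) = b⁻¹ * (c * b * c⁻¹) := by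
    calc (c * b * c⁻¹)⁻¹ * ((b * a) ^ (16:ℕ) * a ^ (-4:ℤ))
        = (c * b * c⁻¹)⁻¹ * (c * (c * b * c⁻¹) * c⁻¹) := by rw [e1]
      _ = c * (b⁻¹ * (c * b * c⁻¹)) * c⁻¹ := by group
      _ = b⁻¹ * (c * b * c⁻¹) := hsc
  -- EF raw relation
  have f1 : c * (c * (b * a) * c⁻¹) * c⁻¹ = (b * a) ^ (16:ℕ) := by
    calc c * (c * (b * a) * c⁻¹) * c⁻¹ = c * (b * a) ^ (4:ℕ) * c⁻¹ := by rw [T2]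
      _ = (c * (b * a) * c⁻¹) ^ (4:ℕ) := by rw [conj_pow]
      _ = ((b * a) ^ (4:ℕ)) ^ (4:ℕ) := by rw [T2]
      _ = (b * a) ^ (16:ℕ) := by rw [← pow_mul]
  have f2 : b⁻¹ * (b * a) ^ (16:ℕ) * b = c * (a * b) * c⁻¹ := by
    calc b⁻¹ * (b * a) ^ (16:ℕ) * b
        = b⁻¹ * (c * (c * (b * a) * c⁻¹) * c⁻¹) * b := by rw [f1]
      _ = (b⁻¹ * (c * c)) * (b * a) * (b⁻¹ * (c * c))⁻¹ := by group
      _ = (c * b⁻¹) * (b * a) * (c * b⁻¹)⁻¹ := by rw [K1]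
      _ = c * (a * b) * c⁻¹ := by group
  have f3 : c * (a * b) * c⁻¹ = (a * a) * ((b * a) ^ (4:ℕ) * a ^ (-2:ℤ)) := by
    calc c * (a * b) * c⁻¹ = (c * a * c⁻¹) * (c * b * c⁻¹) := by group
      _ = (a * a) * ((b * a) ^ (4:ℕ) * a ^ (-2:ℤ)) := by rw [h3, T1]
  have EF : b⁻¹ * (b * a) ^ (16:ℕ) * b = (a * a) * ((b * a) ^ (4:ℕ) * a ^ (-2:ℤ)) :=
    f2.trans f3
  -- normal forms
  have nf4 : (b * a) ^ (4:ℕ) = b ^ (15:ℤ) * a ^ (4:ℤ) := by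
    have := G1 4; norm_num at this; exact_mod_cast this
  have nf16 : (b * a) ^ (16:ℕ) = b ^ (65535:ℤ) * a ^ (16:ℤ) := by
    have := G1 16; norm_num at this; exact_mod_cast this
  -- numeric form of EB : b^65520 * a^12 = b^56 * a^4 — derive a^8 = b^(-65464)
  have EBn : a ^ (-2:ℤ) * b ^ (65520:ℤ) * a ^ (12:ℤ) = b ^ (14:ℤ) * a ^ (2:ℤ) := by
    have lhs : (c * b * c⁻¹)⁻¹ * ((b * a) ^ (16:ℕ) * a ^ (-4:ℤ))
        = a ^ (-2:ℤ) * b ^ (65520:ℤ) * a ^ (12:ℤ) := by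
      rw [T1, nf4, nf16]; group
    have rhs : b⁻¹ * (c * b * c⁻¹) = b ^ (14:ℤ) * a ^ (2:ℤ) := by
      rw [T1, nf4]; group
    rw [← lhs, ← rhs]; exact EB
  have NB : a ^ (8:ℤ) = b ^ (-65464:ℤ) := by
    have step : b ^ (65520:ℤ) * a ^ (12:ℤ) = b ^ (56:ℤ) * a ^ (4:ℤ) := by
      have h56 : a ^ (2:ℤ) * b ^ (14:ℤ) * (a ^ (2:ℤ))⁻¹ = b ^ (56:ℤ) := by
        have := L2 2 14; norm_num at this; exact_mod_cast this
      calc b ^ (65520:ℤ) * a ^ (12:ℤ)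
          = a ^ (2:ℤ) * (a ^ (-2:ℤ) * b ^ (65520:ℤ) * a ^ (12:ℤ)) := by group
        _ = a ^ (2:ℤ) * (b ^ (14:ℤ) * a ^ (2:ℤ)) := by rw [EBn]
        _ = (a ^ (2:ℤ) * b ^ (14:ℤ) * (a ^ (2:ℤ))⁻¹) * a ^ (4:ℤ) := by group
        _ = b ^ (56:ℤ) * a ^ (4:ℤ) := by rw [h56]
    calc a ^ (8:ℤ) = b ^ (-65520:ℤ) * (b ^ (65520:ℤ) * a ^ (12:ℤ)) * a ^ (-4:ℤ) := by group
      _ = b ^ (-65520:ℤ) * (b ^ (56:ℤ) * a ^ (4:ℤ)) * a ^ (-4:ℤ) := by rw [step]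
      _ = b ^ (-65464:ℤ) := by group
  -- numeric form of EF — derive a^12 = b^(-131010)
  have NC : a ^ (12:ℤ) = b ^ (-131010:ℤ) := by
    have hl : b⁻¹ * (b * a) ^ (16:ℕ) * b = b ^ (131070:ℤ) * a ^ (16:ℤ) := by
      have h65536 : a ^ (16:ℤ) * b * (a ^ (16:ℤ))⁻¹ = b ^ (65536:ℤ) := by
        have := L2 16 1; norm_num at this; exact_mod_cast this
      calc b⁻¹ * (b * a) ^ (16:ℕ) * b = b⁻¹ * (b ^ (65535:ℤ) * a ^ (16:ℤ)) * b := by rw [nf16]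
        _ = b ^ (65534:ℤ) * (a ^ (16:ℤ) * b * (a ^ (16:ℤ))⁻¹) * a ^ (16:ℤ) := by group
        _ = b ^ (65534:ℤ) * b ^ (65536:ℤ) * a ^ (16:ℤ) := by rw [h65536]
        _ = b ^ (131070:ℤ) * a ^ (16:ℤ) := by group
    have hr : (a * a) * ((b * a) ^ (4:ℕ) * a ^ (-2:ℤ)) = b ^ (60:ℤ) * a ^ (4:ℤ) := by
      have h60 : a ^ (2:ℤ) * b ^ (15:ℤ) * (a ^ (2:ℤ))⁻¹ = b ^ (60:ℤ) := by
        have := L2 2 15; norm_num at this; exact_mod_cast this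
      calc (a * a) * ((b * a) ^ (4:ℕ) * a ^ (-2:ℤ))
          = (a * a) * (b ^ (15:ℤ) * a ^ (4:ℤ) * a ^ (-2:ℤ)) := by rw [nf4]
        _ = a ^ (2:ℤ) * (b ^ (15:ℤ) * a ^ (4:ℤ) * a ^ (-2:ℤ)) := by
              rw [show a * a = a ^ (2:ℤ) from (zpow_two a).symm]
        _ = (a ^ (2:ℤ) * b ^ (15:ℤ) * (a ^ (2:ℤ))⁻¹) * a ^ (4:ℤ) := by group
        _ = b ^ (60:ℤ) * a ^ (4:ℤ) := by rw [h60]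
    have NF : b ^ (131070:ℤ) * a ^ (16:ℤ) = b ^ (60:ℤ) * a ^ (4:ℤ) := by
      rw [← hl, ← hr]; exact EF
    calc a ^ (12:ℤ) = b ^ (-131070:ℤ) * (b ^ (131070:ℤ) * a ^ (16:ℤ)) * a ^ (-4:ℤ) := by group
      _ = b ^ (-131070:ℤ) * (b ^ (60:ℤ) * a ^ (4:ℤ)) * a ^ (-4:ℤ) := by rw [NF]
      _ = b ^ (-131010:ℤ) := by group
  -- torsion of b
  have b255 : b ^ (255:ℤ) = 1 := by
    have h256 : b ^ (256:ℤ) = b := by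
      have hL := L2 8 1; norm_num at hL
      calc b ^ (256:ℤ) = a ^ (8:ℤ) * b * (a ^ (8:ℤ))⁻¹ := by exact_mod_cast hL.symm
        _ = b ^ (-65464:ℤ) * b * (b ^ (-65464:ℤ))⁻¹ := by rw [NB]
        _ = b := by group
    calc b ^ (255:ℤ) = b ^ (256:ℤ) * b⁻¹ := by group
      _ = 1 := by rw [h256]; group
  have b4095 : b ^ (4095:ℤ) = 1 := by
    have h4096 : b ^ (4096:ℤ) = b := by
      have hL := L2 12 1; norm_num at hL
      calc b ^ (4096:ℤ) = a ^ (12:ℤ) * b * (a ^ (12:ℤ))⁻¹ := by exact_mod_cast hL.symm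
        _ = b ^ (-131010:ℤ) * b * (b ^ (-131010:ℤ))⁻¹ := by rw [NC]
        _ = b := by group
    calc b ^ (4095:ℤ) = b ^ (4096:ℤ) * b⁻¹ := by group
      _ = 1 := by rw [h4096]; group
  have b15 : b ^ (15:ℤ) = 1 := by
    calc b ^ (15:ℤ) = b ^ (4095:ℤ) * (b ^ (255:ℤ)) ^ (-16:ℤ) := by group
      _ = 1 := by rw [b4095, b255]; group
  -- a^4 = b^4
  have a4 : a ^ (4:ℤ) = b ^ (4:ℤ) := by
    calc a ^ (4:ℤ) = a ^ (12:ℤ) * (a ^ (8:ℤ))⁻¹ := by group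
      _ = b ^ (-131010:ℤ) * (b ^ (-65464:ℤ))⁻¹ := by rw [NB, NC]
      _ = (b ^ (15:ℤ)) ^ (-4370:ℤ) * b ^ (4:ℤ) := by group
      _ = b ^ (4:ℤ) := by rw [b15]; group
  have b4 : b ^ (4:ℤ) = 1 := by
    have h8 : b ^ (8:ℤ) = b ^ (4:ℤ) := by
      have hL := L1 4; norm_num at hL
      calc b ^ (8:ℤ) = a * b ^ (4:ℤ) * a⁻¹ := by exact_mod_cast hL.symm
        _ = a * a ^ (4:ℤ) * a⁻¹ := by rw [a4]
        _ = a ^ (4:ℤ) := by group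
        _ = b ^ (4:ℤ) := a4
    calc b ^ (4:ℤ) = b ^ (8:ℤ) * (b ^ (4:ℤ))⁻¹ := by group
      _ = b ^ (4:ℤ) * (b ^ (4:ℤ))⁻¹ := by rw [h8]
      _ = 1 := by group
  have hb : b = 1 := by
    calc b = (b ^ (4:ℤ)) ^ (4:ℤ) * (b ^ (15:ℤ))⁻¹ := by group
      _ = 1 := by rw [b4, b15]; group
  have ha4 : a ^ (4:ℤ) = 1 := by rw [a4, b4]
  have ha2 : a ^ (2:ℤ) = 1 := by
    have := L3 2; norm_num at this
    calc a ^ (2:ℤ) = c⁻¹ * (c * a ^ (2:ℤ) * c⁻¹) * c := by group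
      _ = c⁻¹ * a ^ (4:ℤ) * c := by rw [show c * a ^ (2:ℤ) * c⁻¹ = a ^ (4:ℤ) by exact_mod_cast this]
      _ = 1 := by rw [ha4]; group
  have ha : a = 1 := by
    calc a = c⁻¹ * (c * a * c⁻¹) * c := by group
      _ = c⁻¹ * (a * a) * c := by rw [h3]
      _ = c⁻¹ * a ^ (2:ℤ) * c := by rw [← zpow_two]
      _ = 1 := by rw [ha2]; group
  have hc : c = 1 := by
    have : c * c = c := by
      calc c * c = b * c * b⁻¹ := h2.symm
        _ = c := by rw [hb]; group
    calc c = (c * c) * c⁻¹ := by group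
      _ = c * c⁻¹ := by rw [this]
      _ = 1 := by group
  exact ⟨ha, hb, hc⟩

lemma presented_rel_one {α : Type*} {rels : Set (FreeGroup α)} {r : FreeGroup α} (hr : r ∈ rels) :
    PresentedGroup.mk rels r = 1 :=
  (QuotientGroup.eq_one_iff r).mpr (Subgroup.subset_normalClosure hr)

lemma part1 : ∀ x : PresentedGroup TripleRels, x = 1 := by
  set A := (PresentedGroup.of 0 : PresentedGroup TripleRels) with hA
  set B := (PresentedGroup.of 1 : PresentedGroup TripleRels) with hB
  set C := (PresentedGroup.of 2 : PresentedGroup TripleRels) with hC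
  have rel : ∀ r ∈ TripleRels, PresentedGroup.mk TripleRels r = 1 := fun r hr =>
    presented_rel_one hr
  have h1 : A * B * A⁻¹ = B * B := by
    have := rel (FreeGroup.of 0 * FreeGroup.of 1 * (FreeGroup.of 0)⁻¹ *
      (FreeGroup.of 1 * FreeGroup.of 1)⁻¹) (by right; right; exact rfl)
    simp only [map_mul, map_inv] at this
    have h' := mul_inv_eq_one.mp this
    exact h'
  have h2 : B * C * B⁻¹ = C * C := by
    have := rel (FreeGroup.of 1 * FreeGroup.of 2 * (FreeGroup.of 1)⁻¹ *
      (FreeGroup.of 2 * FreeGroup.of 2)⁻¹) (by left; exact rfl)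
    simp only [map_mul, map_inv] at this
    exact mul_inv_eq_one.mp this
  have h3 : C * A * C⁻¹ = A * A := by
    have := rel (FreeGroup.of 2 * FreeGroup.of 0 * (FreeGroup.of 2)⁻¹ *
      (FreeGroup.of 0 * FreeGroup.of 0)⁻¹) (by right; left; exact rfl)
    simp only [map_mul, map_inv] at this
    exact mul_inv_eq_one.mp this
  obtain ⟨ha, hb, hc⟩ := key_lemma A B C h1 h2 h3
  intro x
  have : x ∈ (⊥ : Subgroup (PresentedGroup TripleRels)) := by
    apply PresentedGroup.generated_by
    intro j
    fin_cases j
    · exact Subgroup.mem_bot.mpr (show A = 1 from ha)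
    · exact Subgroup.mem_bot.mpr (show B = 1 from hb)
    · exact Subgroup.mem_bot.mpr (show C = 1 from hc)
  exact Subgroup.mem_bot.mp this

lemma part2 : ∀ i : Fin 3, ∃ a : Agrp i, a ≠ 1 := by
  intro i
  set f : {j : Fin 3 // j ≠ i} → Multiplicative ℤ :=
    fun j => if (j : Fin 3) = i + 1 then Multiplicative.ofAdd 1 else 1 with hf
  have hne : (i + 2 : Fin 3) ≠ i + 1 := by
    revert i; decide
  have hrel : ∀ r ∈ PairRel i, FreeGroup.lift f r = 1 := by
    intro r hr
    rcases hr with rfl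
    simp only [map_mul, map_inv, FreeGroup.lift_apply_of, hf]
    simp only [if_true, if_neg hne]
    group
  refine ⟨PresentedGroup.of ⟨i + 1, (by decide : ∀ j : Fin 3, j + 1 ≠ j) i⟩, fun h => ?_⟩
  have := congrArg (PresentedGroup.toGroup hrel) h
  rw [PresentedGroup.toGroup.of, map_one, hf] at this
  simp only [if_pos rfl] at this
  exact absurd this (by decide)

namespace Part3

noncomputable def pi3 : (Monoid.CoprodI fun i => Agrp i) →* (Monoid.CoprodI fun i => Agrp i) ⧸ TripleAmalRel :=
  QuotientGroup.mk' TripleAmalRel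

noncomputable def q (i k : Fin 3) (hki : k ≠ i) :
    (Monoid.CoprodI fun i => Agrp i) ⧸ TripleAmalRel :=
  pi3 (Monoid.CoprodI.of (PresentedGroup.of (rels := PairRel i) ⟨k, hki⟩))

lemma transfer (i j k : Fin 3) (hij : i ≠ j) (hki : k ≠ i) (hkj : k ≠ j) :
    q i k hki = q j k hkj := by
  rw [q, q, ← mul_inv_eq_one, ← map_inv, ← map_mul]
  refine (QuotientGroup.eq_one_iff _).mpr (Subgroup.subset_normalClosure ?_)
  exact ⟨i, j, k, hij, hki, hkj, 1, by rw [zpow_one, zpow_one]⟩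

lemma relq (i : Fin 3) :
    q i (i+1) ((by decide : ∀ j : Fin 3, j + 1 ≠ j) i) *
      q i (i+2) ((by decide : ∀ j : Fin 3, j + 2 ≠ j) i) *
      (q i (i+1) ((by decide : ∀ j : Fin 3, j + 1 ≠ j) i))⁻¹ =
    q i (i+2) ((by decide : ∀ j : Fin 3, j + 2 ≠ j) i) *
      q i (i+2) ((by decide : ∀ j : Fin 3, j + 2 ≠ j) i) := by
  have R := presented_rel_one (rels := PairRel i)
    (show (FreeGroup.of ⟨i + 1, (by decide : ∀ j : Fin 3, j + 1 ≠ j) i⟩ *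
     FreeGroup.of ⟨i + 2, (by decide : ∀ j : Fin 3, j + 2 ≠ j) i⟩ *
     (FreeGroup.of ⟨i + 1, (by decide : ∀ j : Fin 3, j + 1 ≠ j) i⟩)⁻¹ *
     (FreeGroup.of ⟨i + 2, (by decide : ∀ j : Fin 3, j + 2 ≠ j) i⟩ *
        FreeGroup.of ⟨i + 2, (by decide : ∀ j : Fin 3, j + 2 ≠ j) i⟩)⁻¹) ∈ PairRel i from rfl)
  simp only [map_mul, map_inv] at R
  have R' := mul_inv_eq_one.mp R
  have h := congrArg (pi3.comp (Monoid.CoprodI.of (M := fun t => Agrp t) (i := i))) R'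
  simpa only [q, PresentedGroup.of, map_mul, map_inv, MonoidHom.comp_apply] using h

lemma gens_one : ∀ (i : Fin 3) (j : {j : Fin 3 // j ≠ i}),
    pi3 (Monoid.CoprodI.of (PresentedGroup.of (rels := PairRel i) j)) = 1 := by
  have hA : q 1 0 (by decide) = 1 ∧ q 2 1 (by decide) = 1 ∧ q 0 2 (by decide) = 1 := by
    have h1 : q 1 0 (by decide) * q 2 1 (by decide) * (q 1 0 (by decide))⁻¹ =
        q 2 1 (by decide) * q 2 1 (by decide) := by
      have e : q 2 0 (by decide) * q 2 1 (by decide) * (q 2 0 (by decide))⁻¹ =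
          q 2 1 (by decide) * q 2 1 (by decide) := relq 2
      rwa [transfer 2 1 0 (by decide) (by decide) (by decide)] at e
    have h2 : q 2 1 (by decide) * q 0 2 (by decide) * (q 2 1 (by decide))⁻¹ =
        q 0 2 (by decide) * q 0 2 (by decide) := by
      have e : q 0 1 (by decide) * q 0 2 (by decide) * (q 0 1 (by decide))⁻¹ =
          q 0 2 (by decide) * q 0 2 (by decide) := relq 0
      rwa [transfer 0 2 1 (by decide) (by decide) (by decide)] at e
    have h3 : q 0 2 (by decide) * q 1 0 (by decide) * (q 0 2 (by decide))⁻¹ =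
        q 1 0 (by decide) * q 1 0 (by decide) := by
      have e : q 1 2 (by decide) * q 1 0 (by decide) * (q 1 2 (by decide))⁻¹ =
          q 1 0 (by decide) * q 1 0 (by decide) := relq 1
      rwa [transfer 1 0 2 (by decide) (by decide) (by decide)] at e
    exact key_lemma _ _ _ h1 h2 h3
  obtain ⟨hA1, hB1, hC1⟩ := hA
  intro i j
  obtain ⟨k, hk⟩ := j
  fin_cases i <;> fin_cases k
  · exact absurd rfl hk
  · exact (transfer 0 2 1 (by decide) hk (by decide)).trans hB1
  · exact hC1
  · exact hA1
  · exact absurd rfl hk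
  · exact (transfer 1 0 2 (by decide) hk (by decide)).trans hC1
  · exact (transfer 2 1 0 (by decide) hk (by decide)).trans hA1
  · exact hB1
  · exact absurd rfl hk

end Part3

lemma part3 : ∀ x : (Monoid.CoprodI fun i => Agrp i) ⧸ TripleAmalRel, x = 1 := by
  intro x
  induction x using QuotientGroup.induction_on with
  | _ y =>
  show Part3.pi3 y = 1
  induction y using Monoid.CoprodI.induction_on with
  | one => exact map_one _
  | of i m =>
      have : m ∈ (Part3.pi3.comp (Monoid.CoprodI.of (M := fun t => Agrp t) (i := i))).ker := by
        apply PresentedGroup.generated_by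
        intro j
        exact Part3.gens_one i j
      simpa using this
  | mul g h hg hh => rw [map_mul, hg, hh, one_mul]

/-- the group `⟨b₁,b₂,b₃ ∣ b₂b₃b₂⁻¹=b₃², b₃b₁b₃⁻¹=b₁², b₁b₂b₁⁻¹=b₂²⟩` is
trivial; consequently the amalgamated product of the three nontrivial groups `A₁, A₂, A₃`
along the infinite cyclic subgroups `B_{ij} = ⟨b_k⟩` is trivial. -/
theorem statement_18 :
    (∀ x : PresentedGroup TripleRels, x = 1) ∧
    (∀ i : Fin 3, ∃ a : Agrp i, a ≠ 1) ∧
    (∀ x : (Monoid.CoprodI fun i => Agrp i) ⧸ TripleAmalRel, x = 1) := by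
  exact ⟨part1, part2, part3⟩

end
end
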